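/- arXiv:1802.09856 — 5 statements merged into one kernel-verified Lean document; each statement's English description precedes it below -/
import Mathlib

section
/- The number of words of length n over the alphabet {1,2,...,m} consisting of exactly a_i occurrences of letter i (for i = 1,...,m) that avoid the pattern 12...k equals the number of such words that avoid the pattern k...21. (Here a word w contains a pattern x if there is a subsequence of w in the same relative order as x, including equalities.) -/
/-- Two lists of naturals are in the same relative order: equal length and
corresponding entries compare the same way (this also forces equalities to match). -/
def SameRelOrder (u v : List ℕ) : Prop :=
  u.length = v.length ∧
    ∀ i j, i < u.length → j < u.length →
      (u.getD i 0 < u.getD j 0 ↔ v.getD i 0 < v.getD j 0)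

/-- The word `w` contains the pattern `x`. -/
def WContains (w x : List ℕ) : Prop :=
  ∃ u : List ℕ, u.Sublist w ∧ SameRelOrder u x

/-- Number of words with exactly `a.getD i 0` letters `i+1` (letters are positive)
avoiding every pattern in `Ω`. -/
noncomputable def WordCount (a : List ℕ) (Ω : List (List ℕ)) : ℕ :=
  Nat.card {w : List ℕ // (∀ l ∈ w, 0 < l) ∧ (∀ i, w.count (i + 1) = a.getD i 0) ∧
    ∀ x ∈ Ω, ¬ WContains w x}

/-- A Ferrers shape: row lengths (listed bottom to top) are non-increasing and positive. -/
def IsFerrers (lam : List ℕ) : Prop :=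
  lam.Pairwise (· ≥ ·) ∧ ∀ t ∈ lam, 0 < t

/-- A 0-1-filling of the shape `lam` with one 1 per column, encoded as the function `f`
sending each column to the (0-based) row of its 1, contains the pattern `x`:
there are columns `c 0 < c 1 < ⋯` whose rows are in the same relative order as `x`
and such that the full submatrix on these rows and columns lies inside the shape. -/
def FContains (lam : List ℕ) {n : ℕ} (f : Fin n → ℕ) (x : List ℕ) : Prop :=
  ∃ c : Fin x.length → Fin n, StrictMono c ∧
    (∀ j k : Fin x.length, (f (c j) < f (c k) ↔ x.get j < x.get k)) ∧
    (∀ j k : Fin x.length, ((c k : ℕ)) < lam.getD (f (c j)) 0)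

/-- 0-1-fillings of the Ferrers shape `lam` with `n` columns, exactly one 1 in each column
(the 1 of column `c` lying in row `f c`, inside the shape), exactly `a.getD i 0` ones in
row `i`, avoiding all patterns in `Ω`. -/
def FillSet (n : ℕ) (lam a : List ℕ) (Ω : List (List ℕ)) : Set (Fin n → ℕ) :=
  {f | (∀ c : Fin n, (c : ℕ) < lam.getD (f c) 0) ∧
       (∀ i, (Finset.univ.filter fun c => f c = i).card = a.getD i 0) ∧
       ∀ x ∈ Ω, ¬ FContains lam f x}

/-- The number of 0-1-fillings of `lam` (with `lam.getD 0 0` columns, i.e. one column for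
each cell of the bottom row) with one 1 per column, `a.getD i 0` ones in row `i`, avoiding
all patterns in `Ω`. -/
noncomputable def FillingCount (lam a : List ℕ) (Ω : List (List ℕ)) : ℕ :=
  Nat.card (FillSet (lam.getD 0 0) lam a Ω)

/-- Two sets of patterns are shape-Wilf-equivalent for words. -/
def ShapeWilfEq (Ω Sig : List (List ℕ)) : Prop :=
  ∀ lam a : List ℕ, IsFerrers lam → a.length = lam.length → (∀ t ∈ a, 0 < t) →
    FillingCount lam a Ω = FillingCount lam a Sig


lemma getD_reverse' (u : List ℕ) (i : ℕ) (hi : i < u.length) :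
    u.reverse.getD i 0 = u.getD (u.length - 1 - i) 0 := by
  rw [List.getD_eq_getElem _ _ (by simpa using hi),
      List.getD_eq_getElem _ _ (by omega), List.getElem_reverse]

lemma srO_reverse {u v : List ℕ} (h : SameRelOrder u v) :
    SameRelOrder u.reverse v.reverse := by
  obtain ⟨hlen, h⟩ := h
  refine ⟨by simp [hlen], ?_⟩
  intro i j hi hj
  simp only [List.length_reverse] at hi hj
  rw [getD_reverse' _ _ hi, getD_reverse' _ _ hj,
      getD_reverse' _ _ (by omega : i < v.length),
      getD_reverse' _ _ (by omega : j < v.length), hlen]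
  exact h _ _ (by omega) (by omega)

lemma wcontains_reverse {w x : List ℕ} (h : WContains w x) :
    WContains w.reverse x.reverse := by
  obtain ⟨u, hu, hrel⟩ := h
  exact ⟨u.reverse, hu.reverse, srO_reverse hrel⟩

lemma wcontains_reverse_iff (w x : List ℕ) :
    WContains w x ↔ WContains w.reverse x.reverse := by
  constructor
  · exact wcontains_reverse
  · intro h
    simpa using wcontains_reverse h

/-- The number of words with exactly `a.getD i 0` letters `i+1` avoiding the increasing
pattern `12⋯k` equals the number of such words avoiding the decreasing pattern `k⋯21`. -/
theorem stmt_0 (k : ℕ) (a : List ℕ) (ha : ∀ t ∈ a, 0 < t) :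
    WordCount a [(List.range k).map (· + 1)] =
      WordCount a [((List.range k).map (· + 1)).reverse] := by
  unfold WordCount
  apply Nat.card_congr
  refine Equiv.subtypeEquiv (Function.Involutive.toPerm _ List.reverse_reverse) ?_
  intro w
  simp only [Function.Involutive.coe_toPerm, List.mem_reverse, List.count_reverse,
    List.mem_singleton, forall_eq]
  exact and_congr (by rw [show ((Function.Involutive.toPerm List.reverse List.reverse_reverse) w : List ℕ) = w.reverse from rfl]; simp only [List.mem_reverse]) (and_congr (forall_congr' fun i => by rw [show ((Function.Involutive.toPerm List.reverse List.reverse_reverse) w : List ℕ) = w.reverse from rfl, List.count_reverse]) (not_congr (wcontains_reverse_iff _ _)))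
end

section
/- Let R_1 be a 231-avoiding full rook placement on a Ferrers shape λ, and suppose that within a horizontal band of a_i consecutive rows the 1's of R_1 are arranged in increasing fashion (from bottom-left to top-right). Let u_0, u_1, ..., u_{a_i} denote the vertices along the right border of the band and let I_{R_1}(v) be the length of the longest increasing chain of 1's in the region weakly to the left and below of v. Then I_{R_1}(u_{j+1}) = I_{R_1}(u_j) + 1 for all j = 1, 2, ..., a_i - 1. -/
/-- There is an increasing chain of `k` ones of the filling `f` in the region consisting
of the rows with index `< R` and the columns with index `< C`. -/
def IncChain {n : ℕ} (f : Fin n → ℕ) (R C k : ℕ) : Prop :=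
  ∃ c : Fin k → Fin n, StrictMono c ∧ (∀ i, (c i : ℕ) < C ∧ f (c i) < R) ∧
    ∀ i j : Fin k, i < j → f (c i) < f (c j)

/-- `I(v)` for the vertex `v` on the right border at height `R` and horizontal position
`C`: the length of the longest increasing chain of ones weakly left and below of `v`. -/
noncomputable def Ival {n : ℕ} (f : Fin n → ℕ) (R C : ℕ) : ℕ :=
  sSup {k | IncChain f R C k}

/-- If `f` is a 231-avoiding full rook placement on the Ferrers shape `lam` whose ones in
the band of rows `b, …, b + a - 1` (all of common length `L`) are arranged increasingly,
then the values `I` at the vertices `u_1, …, u_a` along the right border of the band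
increase by exactly one at each step. -/
theorem stmt_10 (lam : List ℕ) (hF : IsFerrers lam) (n : ℕ) (hn : n = lam.getD 0 0)
    (f : Fin n → ℕ)
    (hf : f ∈ FillSet n lam (List.replicate lam.length 1) [[2, 3, 1]])
    (b a L : ℕ) (hba : b + a ≤ lam.length)
    (hL : ∀ r, b ≤ r → r < b + a → lam.getD r 0 = L)
    (hinc : ∀ c c' : Fin n, b ≤ f c → f c < b + a → b ≤ f c' → f c' < b + a →
      c < c' → f c < f c')
    (j : ℕ) (hj1 : 1 ≤ j) (hj2 : j < a) :
    Ival f (b + j + 1) L = Ival f (b + j) L + 1 := by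
  obtain ⟨hcolb, hrowc, havoid⟩ := hf
  have hbdd : ∀ R : ℕ, BddAbove {k | IncChain f R L k} := by
    intro R
    refine ⟨n, fun k hk => ?_⟩
    obtain ⟨c, hc, -, -⟩ := hk
    simpa using Fintype.card_le_of_injective c hc.injective
  have h0 : ∀ R : ℕ, 0 ∈ {k | IncChain f R L k} := by
    intro R
    exact ⟨Fin.elim0, fun x => x.elim0, fun i => i.elim0, fun i => i.elim0⟩
  have hrow1 : ∀ r : ℕ, r < lam.length → ∃ c : Fin n, f c = r := by
    intro r hr
    have h1 : (Finset.univ.filter fun c => f c = r).card = 1 := by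
      rw [hrowc r, List.getD_eq_getElem _ _ (by simpa using hr), List.getElem_replicate]
    obtain ⟨c, hc⟩ := Finset.card_eq_one.mp h1
    have := Finset.mem_filter.mp (hc ▸ Finset.mem_singleton_self c)
    exact ⟨c, this.2⟩
  obtain ⟨cj, hcj⟩ := hrow1 (b + j) (by omega)
  obtain ⟨cp, hcp⟩ := hrow1 (b + j - 1) (by omega)
  have hcjL : (cj : ℕ) < L := by
    have := hcolb cj; rwa [hcj, hL _ (by omega) (by omega)] at this
  have hcpL : (cp : ℕ) < L := by
    have := hcolb cp; rwa [hcp, hL _ (by omega) (by omega)] at this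
  have hcpcj : cp < cj := by
    rcases lt_trichotomy cp cj with h | h | h
    · exact h
    · exfalso; rw [h, hcj] at hcp; omega
    · exfalso
      have := hinc cj cp (by omega) (by omega) (by rw [hcp]; omega) (by rw [hcp]; omega) h
      rw [hcj, hcp] at this; omega
  have hmonoD : ∀ r : ℕ, r < b + a → L ≤ lam.getD r 0 := by
    intro r hr
    rcases lt_or_ge r b with h | h
    · have hrlen : r < lam.length := by omega
      have hbj : b + j < lam.length := by omega
      have hrel := hF.1.rel_get_of_lt (a := ⟨r, hrlen⟩) (b := ⟨b + j, hbj⟩)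
        (by simp only [Fin.mk_lt_mk]; omega)
      have hLb : lam.getD (b + j) 0 = L := hL _ (by omega) (by omega)
      rw [List.getD_eq_getElem _ _ hbj] at hLb
      rw [List.getD_eq_getElem _ _ hrlen]
      simp only [List.get_eq_getElem] at hrel
      omega
    · rw [hL r h hr]
  have key : ∀ c' : Fin n, f c' < b + j → (c' : ℕ) < L → c' < cj := by
    intro c' hfc' hc'L
    rcases lt_trichotomy c' cj with h | h | h
    · exact h
    · exfalso; rw [h, hcj] at hfc'; omega
    · exfalso
      rcases lt_or_ge (f c') b with hb' | hb'
      · -- 231 pattern with columns cp < cj < c'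
        apply havoid [2, 3, 1] (by simp)
        have h02 : cp < c' := lt_trans hcpcj h
        refine ⟨![cp, cj, c'], ?_, ?_, ?_⟩
        · intro x y hxy
          fin_cases x <;> fin_cases y <;>
            simp only [Fin.mk_lt_mk, Matrix.cons_val_zero, Matrix.cons_val_one,
              Matrix.head_cons, Matrix.cons_val_two, Matrix.tail_cons] at hxy ⊢ <;>
            first | omega | exact hcpcj | exact h | exact h02
        · intro p q
          fin_cases p <;> fin_cases q <;>
            simp [hcj, hcp, List.get] <;> omega
        · intro p q
          have hcols : ∀ q : Fin 3, ((![cp, cj, c'] q : Fin n) : ℕ) < L := by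
            intro q; fin_cases q
            · exact hcpL
            · exact hcjL
            · exact hc'L
          have hrows : ∀ p : Fin 3, L ≤ lam.getD (f (![cp, cj, c'] p)) 0 := by
            intro p; fin_cases p
            · show L ≤ lam.getD (f cp) 0
              rw [hcp]; exact hmonoD _ (by omega)
            · show L ≤ lam.getD (f cj) 0
              rw [hcj]; exact hmonoD _ (by omega)
            · show L ≤ lam.getD (f c') 0
              exact hmonoD _ (by omega)
          exact lt_of_lt_of_le (hcols q) (hrows p)
      · have := hinc cj c' (by rw [hcj]; omega) (by rw [hcj]; omega) hb' (by omega) h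
        rw [hcj] at this; omega
  -- the value k at the lower vertex
  set k := Ival f (b + j) L with hk
  have hkmem : k ∈ {k | IncChain f (b + j) L k} := Nat.sSup_mem ⟨0, h0 _⟩ (hbdd _)
  obtain ⟨c, h1, h2, h3⟩ := hkmem
  -- extend by the 1 at (cj, b+j)
  have hext : IncChain f (b + j + 1) L (k + 1) := by
    refine ⟨fun i => if h : (i : ℕ) < k then c ⟨i, h⟩ else cj, ?_, ?_, ?_⟩
    · intro x y hxy
      rw [Fin.lt_def] at hxy
      by_cases hy : (y : ℕ) < k
      · have hx : (x : ℕ) < k := by omega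
        simp only [dif_pos hx, dif_pos hy]
        exact h1 (by rw [Fin.lt_def]; exact hxy)
      · by_cases hx : (x : ℕ) < k
        · simp only [dif_pos hx, dif_neg hy]
          exact key _ (h2 _).2 (h2 _).1
        · exfalso; have := x.isLt; have := y.isLt; omega
    · intro i
      by_cases hi : (i : ℕ) < k
      · simp only [dif_pos hi]
        exact ⟨(h2 _).1, by have := (h2 ⟨i, hi⟩).2; omega⟩
      · simp only [dif_neg hi]
        exact ⟨hcjL, by rw [hcj]; omega⟩
    · intro p q hpq
      rw [Fin.lt_def] at hpq
      by_cases hq : (q : ℕ) < k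
      · have hp : (p : ℕ) < k := by omega
        simp only [dif_pos hp, dif_pos hq]
        exact h3 _ _ (by rw [Fin.lt_def]; exact hpq)
      · by_cases hp : (p : ℕ) < k
        · simp only [dif_pos hp, dif_neg hq]
          rw [hcj]; exact (h2 _).2
        · exfalso; have := p.isLt; have := q.isLt; omega
  have hlow : k + 1 ≤ Ival f (b + j + 1) L := le_csSup (hbdd _) hext
  -- upper bound
  have hup : Ival f (b + j + 1) L ≤ k + 1 := by
    have hmmem : Ival f (b + j + 1) L ∈ {k | IncChain f (b + j + 1) L k} :=
      Nat.sSup_mem ⟨0, h0 _⟩ (hbdd _)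
    generalize hm : Ival f (b + j + 1) L = m at hmmem ⊢
    obtain ⟨d, g1, g2, g3⟩ := hmmem
    rcases Nat.eq_zero_or_pos m with h | h
    · omega
    obtain ⟨m₀, rfl⟩ : ∃ m₀, m = m₀ + 1 := ⟨m - 1, by omega⟩
    have hmem : m₀ ∈ {k | IncChain f (b + j) L k} := by
      refine ⟨fun i => d i.castSucc, ?_, ?_, ?_⟩
      · intro x y hxy
        exact g1 (Fin.castSucc_lt_castSucc_iff.mpr hxy)
      · intro i
        refine ⟨(g2 _).1, ?_⟩
        show f (d i.castSucc) < b + j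
        have hlt : f (d i.castSucc) < f (d (Fin.last m₀)) :=
          g3 _ _ (Fin.castSucc_lt_last i)
        have := (g2 (Fin.last m₀)).2
        omega
      · intro p q hpq
        exact g3 _ _ (Fin.castSucc_lt_castSucc_iff.mpr hpq)
    have : m₀ ≤ k := le_csSup (hbdd _) hmem
    omega
  omega
end

section
/- Let R_2 be a 312-avoiding full rook placement on a Ferrers shape λ, let u_1, ..., u_{a_i} be consecutive vertices along the right border of a band of a_i consecutive rows, and suppose I_{R_2}(u_{j+1}) = I_{R_2}(u_j) for j = 1, ..., a_i - 1, where I_{R_2}(v) is the length of the longest increasing chain of 1's weakly to the left and below of v. Then the 1's of R_2 located in this band are arranged in decreasing fashion: for any two 1's in the band at positions (c, r) and (c', r') with c < c', we have r > r'. -/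
lemma incChain_zero {n : ℕ} (f : Fin n → ℕ) (R C : ℕ) : IncChain f R C 0 :=
  ⟨Fin.elim0, fun a => a.elim0, fun a => a.elim0, fun a => a.elim0⟩

lemma incChain_le {n : ℕ} {f : Fin n → ℕ} {R C k : ℕ} (h : IncChain f R C k) : k ≤ n := by
  obtain ⟨c, hc, -, -⟩ := h
  simpa using Fintype.card_le_of_injective c hc.injective

lemma incChain_ival {n : ℕ} (f : Fin n → ℕ) (R C : ℕ) : IncChain f R C (Ival f R C) := by
  have := Nat.sSup_mem (s := {k | IncChain f R C k}) ⟨0, incChain_zero f R C⟩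
    ⟨n, fun _ hk => incChain_le hk⟩
  exact this

lemma le_ival {n : ℕ} {f : Fin n → ℕ} {R C k : ℕ} (h : IncChain f R C k) : k ≤ Ival f R C :=
  le_csSup ⟨n, fun _ hm => incChain_le hm⟩ h

lemma getD_anti {lam : List ℕ} (h : lam.Pairwise (· ≥ ·)) {i j : ℕ} (hij : i ≤ j)
    (hj : j < lam.length) : lam.getD j 0 ≤ lam.getD i 0 := by
  have hi : i < lam.length := lt_of_le_of_lt hij hj
  rw [List.getD_eq_getElem _ _ hi, List.getD_eq_getElem _ _ hj]
  rcases eq_or_lt_of_le hij with rfl | hlt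
  · exact le_refl _
  · have := h.rel_get_of_lt (a := ⟨i, hi⟩) (b := ⟨j, hj⟩) (Fin.mk_lt_mk.mpr hlt)
    simpa using this

lemma avoid312 {lam : List ℕ} {n : ℕ} {f : Fin n → ℕ}
    (hav : ¬ FContains lam f [3, 1, 2]) {x1 x2 x3 : Fin n} {L : ℕ}
    (h12 : x1 < x2) (h23 : x2 < x3)
    (hr1 : f x2 < f x3) (hr2 : f x3 < f x1)
    (hc1 : (x1 : ℕ) < L) (hc2 : (x2 : ℕ) < L) (hc3 : (x3 : ℕ) < L)
    (hL1 : L ≤ lam.getD (f x1) 0) (hL2 : L ≤ lam.getD (f x2) 0)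
    (hL3 : L ≤ lam.getD (f x3) 0) : False := by
  apply hav
  refine ⟨![x1, x2, x3], ?_, ?_, ?_⟩
  · intro i j hij
    fin_cases i <;> fin_cases j <;> simp_all <;>
      first
        | exact h12 | exact h23 | exact h12.trans h23
        | exact absurd hij (by decide)
  · intro j k
    fin_cases j <;> fin_cases k <;> simp <;> omega
  · intro j k
    simp only [List.getD_eq_getElem?_getD] at hL1 hL2 hL3
    fin_cases j <;> fin_cases k <;> simp <;> omega

/-- If `f` is a 312-avoiding full rook placement on the Ferrers shape `lam` and the values
`I` at the vertices `u_1, …, u_a` along the right border of the band of rows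
`b, …, b + a - 1` (all of common length `L`) are all equal, then the ones of `f` in this
band are arranged in decreasing fashion. -/
theorem stmt_11 (lam : List ℕ) (hF : IsFerrers lam) (n : ℕ) (hn : n = lam.getD 0 0)
    (f : Fin n → ℕ)
    (hf : f ∈ FillSet n lam (List.replicate lam.length 1) [[3, 1, 2]])
    (b a L : ℕ) (hba : b + a ≤ lam.length)
    (hL : ∀ r, b ≤ r → r < b + a → lam.getD r 0 = L)
    (hI : ∀ j : ℕ, 1 ≤ j → j < a → Ival f (b + j + 1) L = Ival f (b + j) L) :
    ∀ c c' : Fin n, b ≤ f c → f c < b + a → b ≤ f c' → f c' < b + a →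
      c < c' → f c' < f c := by
  obtain ⟨hf1, hf2, hf3⟩ := hf
  have hav : ¬ FContains lam f [3, 1, 2] := hf3 _ (by simp)
  intro c c' hbc hca hbc' hca' hcc
  have hcc' : (c : ℕ) < (c' : ℕ) := hcc
  -- uniqueness of the rook in each row
  have huniq : ∀ x y : Fin n, f x < lam.length → f x = f y → x = y := by
    intro x y hx hxy
    have hlen : f x < (List.replicate lam.length 1).length := by simpa using hx
    have h1 : (Finset.univ.filter fun z => f z = f x).card = 1 := by
      rw [hf2 (f x), List.getD_eq_getElem _ _ hlen, List.getElem_replicate]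
    obtain ⟨z, hz⟩ := Finset.card_eq_one.mp h1
    have hx' : x ∈ Finset.univ.filter fun w => f w = f x := by simp
    have hy' : y ∈ Finset.univ.filter fun w => f w = f x := by simp [hxy.symm]
    rw [hz, Finset.mem_singleton] at hx' hy'
    rw [hx', hy']
  by_contra hcon
  push_neg at hcon
  have hne : f c ≠ f c' := fun h =>
    absurd (huniq c c' (lt_of_lt_of_le hca hba) h) (ne_of_lt hcc)
  have hlt : f c < f c' := lt_of_le_of_ne hcon hne
  -- columns c, c' are within the band width L
  have hLc : (c : ℕ) < L := by rw [← hL (f c) hbc hca]; exact hf1 c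
  have hLc' : (c' : ℕ) < L := by rw [← hL (f c') hbc' hca']; exact hf1 c'
  have hLrow : ∀ m : ℕ, m ≤ f c' → L ≤ lam.getD m 0 := by
    intro m hm
    rw [← hL (f c') hbc' hca']
    exact getD_anti hF.1 hm (lt_of_lt_of_le hca' hba)
  -- the I-values along the band agree
  have hconst : ∀ j, 1 ≤ j → j ≤ a → Ival f (b + j) L = Ival f (b + 1) L := by
    intro j h1 h2
    induction j with
    | zero => omega
    | succ m ih =>
      rcases Nat.lt_or_ge 1 (m + 1) with h | h
      · have hm1 : 1 ≤ m := by omega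
        have e1 : Ival f (b + (m + 1)) L = Ival f (b + m) L := hI m hm1 (by omega)
        rw [e1, ih hm1 (by omega)]
      · have : m + 1 = 1 := by omega
        rw [this]
  have hEq : Ival f (f c + 1) L = Ival f (f c' + 1) L := by
    have e1 := hconst (f c + 1 - b) (by omega) (by omega)
    have e2 := hconst (f c' + 1 - b) (by omega) (by omega)
    rw [show b + (f c + 1 - b) = f c + 1 by omega] at e1
    rw [show b + (f c' + 1 - b) = f c' + 1 by omega] at e2
    rw [e1, e2]
  set k := Ival f (f c + 1) L with hk
  obtain ⟨e, hemono, hein, heinc⟩ := incChain_ival f (f c + 1) L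
  -- every chain element that has a successor lies strictly left of column c
  have hnontop : ∀ i : Fin k, (i : ℕ) + 1 < k → (e i : ℕ) < (c : ℕ) := by
    intro i hi
    by_contra hge
    push_neg at hge
    have hi' : ((⟨(i : ℕ) + 1, hi⟩ : Fin k) : ℕ) = (i : ℕ) + 1 := rfl
    have hii' : i < (⟨(i : ℕ) + 1, hi⟩ : Fin k) := by
      rw [Fin.lt_def, hi']; omega
    have h1 : f (e i) < f (e ⟨(i : ℕ) + 1, hi⟩) := heinc i _ hii'
    have h2 : f (e ⟨(i : ℕ) + 1, hi⟩) ≤ f c := Nat.lt_succ_iff.mp (hein _).2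
    have h3 : f (e ⟨(i : ℕ) + 1, hi⟩) < f c := by
      rcases Nat.lt_or_ge (f (e ⟨(i : ℕ) + 1, hi⟩)) (f c) with h | h
      · exact h
      · exfalso
        have hfe : f (e ⟨(i : ℕ) + 1, hi⟩) = f c := le_antisymm h2 h
        have hec : e ⟨(i : ℕ) + 1, hi⟩ = c :=
          huniq _ c (by rw [hfe]; exact lt_of_lt_of_le hca hba) hfe
        have h4 : (e i : ℕ) < (e ⟨(i : ℕ) + 1, hi⟩ : ℕ) := hemono hii'
        rw [hec] at h4
        omega
    have hcei : c < e i := by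
      have hne2 : c ≠ e i := by
        intro h
        rw [← h] at h1
        omega
      exact lt_of_le_of_ne (Fin.le_def.mpr hge) hne2
    exact avoid312 hav hcei (hemono hii') h1 h3
      hLc (hein i).1 (hein _).1
      (hLrow (f c) (le_of_lt hlt)) (hLrow _ (by omega)) (hLrow _ (by omega))
  -- rows of non-top chain elements are strictly below row f c
  have hrowlt : ∀ i : Fin k, (i : ℕ) + 1 < k → f (e i) < f c := by
    intro i hi
    have h2 : f (e i) ≤ f c := Nat.lt_succ_iff.mp (hein i).2
    rcases eq_or_lt_of_le h2 with h | h
    · exfalso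
      have hec : e i = c := huniq _ c (by rw [h]; exact lt_of_lt_of_le hca hba) h
      have := hnontop i hi
      rw [hec] at this
      omega
    · exact h
  by_cases hall : ∀ i : Fin k, (e i : ℕ) < (c' : ℕ)
  · -- append c' to the chain
    have hchain : IncChain f (f c' + 1) L (k + 1) := by
      refine ⟨fun i => if h : (i : ℕ) < k then e ⟨(i : ℕ), h⟩ else c', ?_, ?_, ?_⟩
      · intro i j hij
        have hij' : (i : ℕ) < (j : ℕ) := hij
        by_cases hj : (j : ℕ) < k
        · have hi : (i : ℕ) < k := lt_trans hij' hj
          simp only [dif_pos hi, dif_pos hj]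
          exact hemono (Fin.mk_lt_mk.mpr hij')
        · have hi : (i : ℕ) < k := by have := j.isLt; omega
          simp only [dif_pos hi, dif_neg hj]
          exact Fin.lt_def.mpr (hall ⟨(i : ℕ), hi⟩)
      · intro i
        by_cases hi : (i : ℕ) < k
        · simp only [dif_pos hi]
          exact ⟨(hein _).1,
            Nat.lt_succ_of_le (le_trans (Nat.lt_succ_iff.mp (hein _).2) (le_of_lt hlt))⟩
        · simp only [dif_neg hi]
          exact ⟨hLc', Nat.lt_succ_self _⟩
      · intro i j hij
        have hij' : (i : ℕ) < (j : ℕ) := hij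
        by_cases hj : (j : ℕ) < k
        · have hi : (i : ℕ) < k := lt_trans hij' hj
          simp only [dif_pos hi, dif_pos hj]
          exact heinc _ _ (Fin.mk_lt_mk.mpr hij')
        · have hi : (i : ℕ) < k := by have := j.isLt; omega
          simp only [dif_pos hi, dif_neg hj]
          exact lt_of_le_of_lt (Nat.lt_succ_iff.mp (hein _).2) hlt
    have hfin := le_ival hchain
    rw [← hEq] at hfin
    omega
  · push_neg at hall
    obtain ⟨i0, hi0⟩ := hall
    have htop : (i0 : ℕ) + 1 = k := by
      rcases Nat.lt_or_ge ((i0 : ℕ) + 1) k with h | h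
      · exfalso; have := hnontop i0 h; omega
      · have := i0.isLt; omega
    -- replace the top element by c and append c'
    have hchain : IncChain f (f c' + 1) L (k + 1) := by
      refine ⟨fun i => if h : (i : ℕ) + 2 ≤ k then e ⟨(i : ℕ), by omega⟩
                       else if (i : ℕ) + 2 = k + 1 then c else c', ?_, ?_, ?_⟩
      · intro i j hij
        have hij' : (i : ℕ) < (j : ℕ) := hij
        have hjk : (j : ℕ) ≤ k := by have := j.isLt; omega
        by_cases hj1 : (j : ℕ) + 2 ≤ k
        · have hi1 : (i : ℕ) + 2 ≤ k := by omega
          simp only [dif_pos hi1, dif_pos hj1]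
          exact hemono (Fin.mk_lt_mk.mpr hij')
        · by_cases hj2 : (j : ℕ) + 2 = k + 1
          · have hi1 : (i : ℕ) + 2 ≤ k := by omega
            simp only [dif_pos hi1, dif_neg hj1, if_pos hj2]
            exact Fin.lt_def.mpr (hnontop ⟨(i : ℕ), by omega⟩ (show (i : ℕ) + 1 < k by omega))
          · simp only [dif_neg hj1, if_neg hj2]
            by_cases hi1 : (i : ℕ) + 2 ≤ k
            · simp only [dif_pos hi1]
              exact Fin.lt_def.mpr
                (lt_trans (hnontop ⟨(i : ℕ), by omega⟩ (show (i : ℕ) + 1 < k by omega)) hcc')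
            · have hi2 : (i : ℕ) + 2 = k + 1 := by omega
              simp only [dif_neg hi1, if_pos hi2]
              exact hcc
      · intro i
        by_cases hi1 : (i : ℕ) + 2 ≤ k
        · simp only [dif_pos hi1]
          exact ⟨(hein _).1,
            Nat.lt_succ_of_le (le_trans (Nat.lt_succ_iff.mp (hein _).2) (le_of_lt hlt))⟩
        · by_cases hi2 : (i : ℕ) + 2 = k + 1
          · simp only [dif_neg hi1, if_pos hi2]
            exact ⟨hLc, by omega⟩
          · simp only [dif_neg hi1, if_neg hi2]
            exact ⟨hLc', Nat.lt_succ_self _⟩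
      · intro i j hij
        have hij' : (i : ℕ) < (j : ℕ) := hij
        have hjk : (j : ℕ) ≤ k := by have := j.isLt; omega
        by_cases hj1 : (j : ℕ) + 2 ≤ k
        · have hi1 : (i : ℕ) + 2 ≤ k := by omega
          simp only [dif_pos hi1, dif_pos hj1]
          exact heinc _ _ (Fin.mk_lt_mk.mpr hij')
        · by_cases hj2 : (j : ℕ) + 2 = k + 1
          · have hi1 : (i : ℕ) + 2 ≤ k := by omega
            simp only [dif_pos hi1, dif_neg hj1, if_pos hj2]
            exact hrowlt ⟨(i : ℕ), by omega⟩ (show (i : ℕ) + 1 < k by omega)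
          · by_cases hi1 : (i : ℕ) + 2 ≤ k
            · simp only [dif_pos hi1, dif_neg hj1, if_neg hj2]
              exact lt_of_le_of_lt (Nat.lt_succ_iff.mp (hein _).2) hlt
            · have hi2 : (i : ℕ) + 2 = k + 1 := by omega
              simp only [dif_neg hi1, if_pos hi2, dif_neg hj1, if_neg hj2]
              exact hlt
    have hfin := le_ival hchain
    rw [← hEq] at hfin
    omega
end

section
/- Let λ be a Ferrers shape and (a_1, a_2, ...) positive integers. The 'blowup' map—replacing row i of a filling by a_i rows and rearranging the a_i ones of row i in increasing fashion so that each 1 stays in its column and each new row contains exactly one 1—is a bijection from fillings of λ with one 1 per column and a_i ones in row i that avoid both 231 and 221, onto 231-avoiding full rook placements of the blown-up shape in which, within each band of a_i rows, the 1's increase from bottom-left to top-right. -/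
/-- The blown-up shape: row `i` of `lam` is replaced by `a.getD i 0` rows of its length. -/
def blowShape (lam a : List ℕ) : List ℕ :=
  (List.range lam.length).flatMap fun i => List.replicate (a.getD i 0) (lam.getD i 0)

/-- Index of the bottom row of the `i`-th band in the blown-up shape. -/
def blowRow (a : List ℕ) (i : ℕ) : ℕ := (a.take i).sum

/-- The blowup of a filling: the 1 of column `c`, lying in row `f c`, is moved into the
band of rows of the blown-up shape replacing row `f c`, the ones of each band being
arranged in increasing fashion (each 1 staying in its column). -/
def blowup {n : ℕ} (a : List ℕ) (f : Fin n → ℕ) : Fin n → ℕ := fun c =>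
  blowRow a (f c) + (Finset.univ.filter fun c' => f c' = f c ∧ c' < c).card

/-- Within each band of the blown-up shape, the ones increase from bottom-left to
top-right. -/
def BandIncreasing {n : ℕ} (a : List ℕ) (g : Fin n → ℕ) : Prop :=
  ∀ i : ℕ, ∀ c c' : Fin n,
    blowRow a i ≤ g c → g c < blowRow a (i + 1) →
    blowRow a i ≤ g c' → g c' < blowRow a (i + 1) →
    c < c' → g c < g c'


section Aux
lemma blowShape_nil (a : List ℕ) : blowShape [] a = [] := rfl

lemma blowShape_cons (x : ℕ) (lam' a : List ℕ) :
    blowShape (x :: lam') a = List.replicate (a.getD 0 0) x ++ blowShape lam' a.tail := by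
  unfold blowShape
  rw [show (x :: lam').length = lam'.length + 1 from rfl, List.range_succ_eq_map]
  show (0 :: _).flatMap _ = _
  rw [List.flatMap_cons, List.flatMap_map]
  congr 1
  apply List.flatMap_congr
  intro i _
  have h1 : (x :: lam').getD (i+1) 0 = lam'.getD i 0 := rfl
  have h2 : a.getD (i+1) 0 = a.tail.getD i 0 := by cases a <;> rfl
  simp [Function.comp, h1, h2]

lemma blowRow_succ (a : List ℕ) (i : ℕ) : blowRow a (i+1) = blowRow a i + a.getD i 0 := by
  unfold blowRow
  rw [List.take_succ, List.sum_append]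
  congr 1
  cases h : a[i]? <;> simp [List.getD_eq_getElem?_getD, h]

lemma blowRow_zero (a : List ℕ) : blowRow a 0 = 0 := rfl

lemma blowRow_one (a : List ℕ) : blowRow a 1 = a.getD 0 0 := by
  rw [show (1:ℕ) = 0 + 1 from rfl, blowRow_succ, blowRow_zero]; omega

lemma blowRow_mono (a : List ℕ) : Monotone (blowRow a) :=
  monotone_nat_of_le_succ fun i => by rw [blowRow_succ]; omega

lemma blowRow_length (a : List ℕ) : blowRow a a.length = a.sum := by simp [blowRow]

lemma blowRow_tail (a : List ℕ) (i : ℕ) :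
    blowRow a (i+1) = a.getD 0 0 + blowRow a.tail i := by
  cases a with
  | nil => simp [blowRow]
  | cons b a' => simp [blowRow, List.take_succ_cons]

lemma blowShape_length (lam a : List ℕ) :
    (blowShape lam a).length = blowRow a lam.length := by
  induction lam generalizing a with
  | nil => simp [blowShape_nil, blowRow]
  | cons x l ih =>
    rw [blowShape_cons, List.length_append, List.length_replicate, ih,
      show (x :: l).length = l.length + 1 from rfl, blowRow_tail]

lemma blowShape_getD (lam a : List ℕ) (i r : ℕ) (hi : i < lam.length)
    (h1 : blowRow a i ≤ r) (h2 : r < blowRow a (i+1)) :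
    (blowShape lam a).getD r 0 = lam.getD i 0 := by
  induction lam generalizing a i r with
  | nil => simp at hi
  | cons x l ih =>
    rw [blowShape_cons]
    cases i with
    | zero =>
      have hr : r < a.getD 0 0 := by rw [← blowRow_one]; exact h2
      rw [List.getD_append _ _ _ _ (by simpa using hr)]
      rw [List.getD_eq_getElem?_getD, List.getElem?_replicate, if_pos hr]
      rfl
    | succ i =>
      have h0 : a.getD 0 0 ≤ r := by
        have := blowRow_mono a (show 1 ≤ i + 1 by omega)
        rw [blowRow_one] at this
        omega
      rw [List.getD_append_right _ _ _ _ (by simpa using h0)]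
      simp only [List.length_replicate]
      have e1 : blowRow a (i+1) = a.getD 0 0 + blowRow a.tail i := blowRow_tail a i
      have e2 : blowRow a (i+1+1) = a.getD 0 0 + blowRow a.tail (i+1) := blowRow_tail a (i+1)
      have := ih a.tail i (r - a.getD 0 0) (by simpa using hi) (by omega) (by omega)
      rw [this]; rfl


open Finset

lemma rank_lt {n : ℕ} {f : Fin n → ℕ} {a : List ℕ}
    (hcount : ∀ i, (Finset.univ.filter fun c => f c = i).card = a.getD i 0) (c : Fin n) :
    (Finset.univ.filter fun c' => f c' = f c ∧ c' < c).card < a.getD (f c) 0 := by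
  rw [← hcount (f c)]
  apply Finset.card_lt_card
  have hsub : (Finset.univ.filter fun c' => f c' = f c ∧ c' < c) ⊆
      Finset.univ.filter fun c' => f c' = f c := by
    intro d hd; simp only [Finset.mem_filter] at *; exact ⟨hd.1, hd.2.1⟩
  rw [Finset.ssubset_iff_of_subset hsub]
  exact ⟨c, by simp, by simp⟩

lemma rank_strictMono {n : ℕ} {f : Fin n → ℕ} {a : List ℕ} {c c' : Fin n}
    (heq : f c = f c') (hlt : c < c') :
    (Finset.univ.filter fun d => f d = f c ∧ d < c).card <
      (Finset.univ.filter fun d => f d = f c' ∧ d < c').card := by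
  apply Finset.card_lt_card
  have hsub : (Finset.univ.filter fun d => f d = f c ∧ d < c) ⊆
      Finset.univ.filter fun d => f d = f c' ∧ d < c' := by
    intro d hd; simp only [Finset.mem_filter] at *
    exact ⟨hd.1, heq ▸ hd.2.1, lt_trans hd.2.2 hlt⟩
  rw [Finset.ssubset_iff_of_subset hsub]
  exact ⟨c, by simp [heq, hlt], by simp⟩

lemma blowup_ge {n : ℕ} (a : List ℕ) (f : Fin n → ℕ) (c : Fin n) :
    blowRow a (f c) ≤ blowup a f c := Nat.le_add_right _ _

-- blowRow lemmas (copied)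
lemma band_le {a : List ℕ} {i j x y : ℕ} (hx1 : blowRow a i ≤ x)
    (hy2 : y < blowRow a (j+1)) (hxy : x ≤ y) : i ≤ j := by
  by_contra h
  have : j + 1 ≤ i := by omega
  have := blowRow_mono a this
  omega

lemma band_unique {a : List ℕ} {i j x : ℕ} (hx1 : blowRow a i ≤ x) (hx2 : x < blowRow a (i+1))
    (hy1 : blowRow a j ≤ x) (hy2 : x < blowRow a (j+1)) : i = j :=
  le_antisymm (band_le hx1 hy2 le_rfl) (band_le hy1 hx2 le_rfl)

lemma blowup_lt {n : ℕ} {f : Fin n → ℕ} {a : List ℕ}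
    (hcount : ∀ i, (Finset.univ.filter fun c => f c = i).card = a.getD i 0) (c : Fin n) :
    blowup a f c < blowRow a (f c + 1) := by
  rw [blowRow_succ]
  exact Nat.add_lt_add_left (rank_lt hcount c) _

lemma blowup_strict_same {n : ℕ} {f : Fin n → ℕ} (a : List ℕ) {c c' : Fin n}
    (heq : f c = f c') (hlt : c < c') : blowup a f c < blowup a f c' := by
  unfold blowup
  rw [heq]
  exact Nat.add_lt_add_left (by simpa [heq] using rank_strictMono (a := a) heq hlt) _

lemma blowup_strict_lt {n : ℕ} {f : Fin n → ℕ} {a : List ℕ}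
    (hcount : ∀ i, (Finset.univ.filter fun c => f c = i).card = a.getD i 0) {c c' : Fin n}
    (hlt : f c < f c') : blowup a f c < blowup a f c' := by
  have h1 := blowup_lt hcount c
  have h2 := blowRow_mono a (show f c + 1 ≤ f c' by omega)
  have h3 := blowup_ge a f c'
  omega

lemma blowup_band_eq {n : ℕ} {f : Fin n → ℕ} {a : List ℕ}
    (hcount : ∀ i, (Finset.univ.filter fun c => f c = i).card = a.getD i 0) {c : Fin n} {i : ℕ}
    (h1 : blowRow a i ≤ blowup a f c) (h2 : blowup a f c < blowRow a (i + 1)) : i = f c :=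
  band_unique h1 h2 (blowup_ge a f c) (blowup_lt hcount c)

lemma blowup_injective {n : ℕ} {f : Fin n → ℕ} {a : List ℕ}
    (hcount : ∀ i, (Finset.univ.filter fun c => f c = i).card = a.getD i 0) :
    Function.Injective (blowup a f) := by
  intro c c' h
  have hrow : f c = f c' :=
    blowup_band_eq hcount (h ▸ blowup_ge a f c') (h ▸ blowup_lt hcount c') |>.symm
  rcases lt_trichotomy c c' with hc | hc | hc
  · exact absurd (blowup_strict_same a hrow hc) (by omega)
  · exact hc
  · exact absurd (blowup_strict_same a hrow.symm hc) (by omega)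

lemma getD_pos_lt_length {l : List ℕ} {r : ℕ} (h : 0 < l.getD r 0) : r < l.length := by
  by_contra hr
  rw [List.getD_eq_default _ _ (by omega)] at h
  omega

lemma replicate_getD (N r : ℕ) : (List.replicate N 1).getD r 0 = if r < N then 1 else 0 := by
  split
  · rw [List.getD_eq_getElem?_getD, List.getElem?_replicate, if_pos ‹r < N›]; rfl
  · rw [List.getD_eq_default _ _ (by simpa using by omega)]

lemma fiber_card_eq_one {n : ℕ} {g : Fin n → ℕ} (hinj : Function.Injective g)
    (hlt : ∀ c, g c < n) (r : ℕ) :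
    (Finset.univ.filter fun c => g c = r).card = if r < n then 1 else 0 := by
  split
  · rename_i hr
    have hbij : Function.Bijective (fun c : Fin n => (⟨g c, hlt c⟩ : Fin n)) :=
      Finite.injective_iff_bijective.mp (fun c c' h => hinj (by simpa using congrArg Fin.val h))
    obtain ⟨c0, hc0⟩ := hbij.2 ⟨r, hr⟩
    have : (Finset.univ.filter fun c => g c = r) = {c0} := by
      ext c
      simp only [Finset.mem_filter, Finset.mem_univ, true_and, Finset.mem_singleton]
      constructor
      · intro h
        exact hinj (h.trans (congrArg Fin.val hc0).symm)
      · rintro rfl; exact congrArg Fin.val hc0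
    rw [this]; rfl
  · rename_i hr
    rw [Finset.card_eq_zero]
    ext c
    simp only [Finset.mem_filter, Finset.mem_univ, true_and, Finset.notMem_empty, iff_false]
    intro h; exact hr (h ▸ hlt c)


section Transfer
variable {lam a : List ℕ} {n : ℕ} {f g : Fin n → ℕ}
  (hA : ∀ c, blowRow a (f c) ≤ g c ∧ g c < blowRow a (f c + 1))
  (hB : ∀ c c', f c = f c' → c < c' → g c < g c')
  (hC : ∀ c, f c < lam.length)

include hA in
lemma band_le_of_g {c c' : Fin n} (h : g c ≤ g c') : f c ≤ f c' :=
  band_le (hA c).1 (hA c').2 h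

include hA in
lemma g_lt_of_band_lt {c c' : Fin n} (h : f c < f c') : g c < g c' := by
  have h1 := (hA c).2
  have h2 := blowRow_mono a (show f c + 1 ≤ f c' by omega)
  have h3 := (hA c').1
  omega

include hA hC in
lemma shape_transfer (c : Fin n) :
    (blowShape lam a).getD (g c) 0 = lam.getD (f c) 0 :=
  blowShape_getD lam a (f c) (g c) (hC c) (hA c).1 (hA c).2

include hA hB hC in
lemma trans_forward (h : FContains (blowShape lam a) g [2,3,1]) :
    FContains lam f [2,3,1] ∨ FContains lam f [2,2,1] := by
  obtain ⟨c, hmono, hrel, hshape⟩ := h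
  have h01 : g (c ((0 : Fin 3))) < g (c ((1 : Fin 3))) := (hrel (0 : Fin 3) (1 : Fin 3)).mpr (by decide)
  have h20 : g (c ((2 : Fin 3))) < g (c ((0 : Fin 3))) := (hrel (2 : Fin 3) (0 : Fin 3)).mpr (by decide)
  have hf01 : f (c ((0 : Fin 3))) ≤ f (c ((1 : Fin 3))) := band_le_of_g hA h01.le
  have hf20 : f (c ((2 : Fin 3))) ≤ f (c ((0 : Fin 3))) := band_le_of_g hA h20.le
  have hf20' : f (c ((2 : Fin 3))) < f (c ((0 : Fin 3))) := by
    rcases lt_or_eq_of_le hf20 with h | h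
    · exact h
    · have := hB (c ((0 : Fin 3))) (c ((2 : Fin 3))) h.symm (hmono (show ((0:Fin 3) : Fin ([2,3,1].length)) < (2 : Fin 3) by decide))
      omega
  have hsh : ∀ j k : Fin 3, ((c k : ℕ)) < lam.getD (f (c j)) 0 := by
    intro j k
    have := hshape j k
    rwa [shape_transfer hA hC] at this
  rcases lt_or_eq_of_le hf01 with h | h
  · left
    refine ⟨c, hmono, ?_, hsh⟩
    intro j k; fin_cases j <;> fin_cases k <;> simp <;> omega
  · right
    refine ⟨c, hmono, ?_, hsh⟩
    intro j k; fin_cases j <;> fin_cases k <;> simp <;> omega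

include hA hB hC in
lemma trans_backward (h : FContains lam f [2,3,1] ∨ FContains lam f [2,2,1]) :
    FContains (blowShape lam a) g [2,3,1] := by
  have key : ∀ c' : Fin 3 → Fin n, StrictMono c' →
      g (c' (0)) < g (c' (1)) → g (c' (2)) < g (c' (0)) →
      (∀ j k : Fin 3, ((c' k : ℕ)) < lam.getD (f (c' j)) 0) →
      FContains (blowShape lam a) g [2,3,1] := by
    intro c' hmono hg01 hg20 hsh
    refine ⟨c', hmono, ?_, ?_⟩
    · intro j k; fin_cases j <;> fin_cases k <;> simp <;> omega
    · intro j k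
      rw [shape_transfer hA hC]
      exact hsh j k
  rcases h with ⟨c, hmono, hrel, hshape⟩ | ⟨c, hmono, hrel, hshape⟩
  · have h01 : f (c ((0 : Fin 3))) < f (c ((1 : Fin 3))) := (hrel (0 : Fin 3) (1 : Fin 3)).mpr (by decide)
    have h20 : f (c ((2 : Fin 3))) < f (c ((0 : Fin 3))) := (hrel (2 : Fin 3) (0 : Fin 3)).mpr (by decide)
    exact key c hmono (g_lt_of_band_lt hA h01) (g_lt_of_band_lt hA h20) hshape
  · have h01 : f (c ((0 : Fin 3))) = f (c ((1 : Fin 3))) := by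
      have a1 := hrel (0 : Fin 3) (1 : Fin 3); have a2 := hrel (1 : Fin 3) (0 : Fin 3)
      simp at a1 a2; omega
    have h20 : f (c ((2 : Fin 3))) < f (c ((0 : Fin 3))) := (hrel (2 : Fin 3) (0 : Fin 3)).mpr (by decide)
    exact key c hmono
      (hB _ _ h01 (hmono (show ((0:Fin 3) : Fin ([2,2,1].length)) < (1 : Fin 3) by decide)))
      (g_lt_of_band_lt hA h20) hshape

end Transfer

end Aux

/-- The blowup map is a bijection from the {231, 221}-avoiding fillings of `lam` with one
1 per column and `a.getD i 0` ones in row `i` onto the 231-avoiding full rook placements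
of the blown-up shape whose ones increase within each band. -/
theorem stmt_12 (lam a : List ℕ) (hF : IsFerrers lam) (ha : a.length = lam.length)
    (hpos : ∀ t ∈ a, 0 < t) (n : ℕ) (hn : n = lam.getD 0 0) (hsum : a.sum = n) :
    Set.BijOn (blowup a)
      (FillSet n lam a [[2, 3, 1], [2, 2, 1]])
      (FillSet n (blowShape lam a) (List.replicate (blowShape lam a).length 1) [[2, 3, 1]]
        ∩ {g | BandIncreasing a g}) := by
  classical
  have hsum' : blowRow a a.length = n := by rw [blowRow_length]; exact hsum
  have hlen : (blowShape lam a).length = n := by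
    rw [blowShape_length, ← ha, hsum']
  refine ⟨?_, ?_, ?_⟩
  · -- MapsTo
    intro f hf
    obtain ⟨hshape, hcount, havoid⟩ := hf
    have hfrow : ∀ c, f c < lam.length := fun c =>
      getD_pos_lt_length (lt_of_le_of_lt (Nat.zero_le _) (hshape c))
    have hfrow' : ∀ c, f c < a.length := fun c => by rw [ha]; exact hfrow c
    set g := blowup a f with hg
    have hA : ∀ c, blowRow a (f c) ≤ g c ∧ g c < blowRow a (f c + 1) :=
      fun c => ⟨blowup_ge a f c, blowup_lt hcount c⟩
    have hB : ∀ c c', f c = f c' → c < c' → g c < g c' :=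
      fun c c' h h' => blowup_strict_same a h h'
    have hglt : ∀ c, g c < n := fun c =>
      lt_of_lt_of_le (hA c).2 (by rw [← hsum']; exact blowRow_mono a (hfrow' c))
    have hginj : Function.Injective g := blowup_injective hcount
    constructor
    · refine ⟨?_, ?_, ?_⟩
      · intro c
        rw [shape_transfer hA hfrow c]
        exact hshape c
      · intro r
        rw [hlen, replicate_getD, fiber_card_eq_one hginj hglt]
      · intro x hx
        simp only [List.mem_cons, List.mem_singleton, List.not_mem_nil, or_false] at hx
        rcases hx with rfl | rfl
        · intro hcontains
          rcases trans_forward hA hB hfrow hcontains with h | h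
          · exact havoid [2,3,1] (by simp) h
          · exact havoid [2,2,1] (by simp) h
    · -- BandIncreasing
      intro i c c' h1 h2 h3 h4 hlt
      have e1 : i = f c := band_unique h1 h2 (hA c).1 (hA c).2
      have e2 : i = f c' := band_unique h3 h4 (hA c').1 (hA c').2
      exact hB c c' (e1 ▸ e2) hlt
  · -- InjOn
    intro f1 h1 f2 h2 heq
    funext c
    have e := congrFun heq c
    have hr : f1 c = f2 c := by
      have := blowup_band_eq h2.2.1 (c := c) (i := f1 c)
        (e ▸ blowup_ge a f1 c) (e ▸ blowup_lt h1.2.1 c)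
      exact this
    -- now ranks must be equal; but we only need f1 = f2 as functions:
    exact hr
  · -- SurjOn
    rintro g ⟨⟨hgshape, hgcount, hgavoid⟩, hband⟩
    have hglt : ∀ c, g c < n := fun c => by
      have h0 : 0 < (blowShape lam a).getD (g c) 0 :=
        lt_of_le_of_lt (Nat.zero_le _) (hgshape c)
      have := getD_pos_lt_length h0
      omega
    have hgfib : ∀ r, (Finset.univ.filter fun c => g c = r).card = if r < n then 1 else 0 := by
      intro r; rw [hgcount r, hlen, replicate_getD]
    have hginj : Function.Injective g := by
      intro c c' h
      have hcard := hgfib (g c)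
      rw [if_pos (hglt c)] at hcard
      exact Finset.card_le_one.mp (le_of_eq hcard) c (by simp) c' (by simp [h])
    set f : Fin n → ℕ := fun c => Nat.findGreatest (fun i => blowRow a i ≤ g c) a.length
      with hfdef
    have hAle : ∀ c, blowRow a (f c) ≤ g c := fun c =>
      Nat.findGreatest_spec (P := fun i => blowRow a i ≤ g c) (m := 0)
        (Nat.zero_le _) (Nat.zero_le _)
    have hflt : ∀ c, f c < a.length := by
      intro c
      rcases lt_or_ge (f c) a.length with h | h
      · exact h
      · exfalso
        have hfle : f c ≤ a.length := Nat.findGreatest_le a.length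
        have heq2 : f c = a.length := le_antisymm hfle h
        have hle := hAle c
        rw [heq2, hsum'] at hle
        have := hglt c; omega
    have hA : ∀ c, blowRow a (f c) ≤ g c ∧ g c < blowRow a (f c + 1) := by
      intro c
      have hnot : ¬ blowRow a (f c + 1) ≤ g c :=
        Nat.findGreatest_is_greatest (P := fun i => blowRow a i ≤ g c)
          (Nat.lt_succ_self _) (hflt c)
      exact ⟨hAle c, by omega⟩
    have hC : ∀ c, f c < lam.length := fun c => by rw [← ha]; exact hflt c
    have hB : ∀ c c', f c = f c' → c < c' → g c < g c' := by
      intro c c' h h'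
      exact hband (f c) c c' (hA c).1 (hA c).2 (h ▸ (hA c').1) (h ▸ (hA c').2) h'
    have hfib : ∀ i, (Finset.univ.filter fun c => f c = i).card = a.getD i 0 := by
      intro i
      rcases lt_or_ge i a.length with hi | hi
      · have hset : (Finset.univ.filter fun c => f c = i) =
            Finset.univ.filter fun c => g c ∈ Finset.Ico (blowRow a i) (blowRow a (i+1)) := by
          ext c
          simp only [Finset.mem_filter, Finset.mem_univ, true_and, Finset.mem_Ico]
          constructor
          · rintro rfl; exact ⟨(hA c).1, (hA c).2⟩
          · rintro ⟨u, v⟩; exact band_unique (hA c).1 (hA c).2 u v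
        rw [hset]
        rw [Finset.card_eq_sum_card_fiberwise (f := g)
          (t := Finset.Ico (blowRow a i) (blowRow a (i+1)))
          (fun c hc => by simpa using (Finset.mem_filter.mp hc).2)]
        have hterm : ∀ r ∈ Finset.Ico (blowRow a i) (blowRow a (i+1)),
            ((Finset.univ.filter fun c => g c ∈ Finset.Ico (blowRow a i) (blowRow a (i+1))).filter
              fun c => g c = r).card = 1 := by
          intro r hr
          have hrmem := Finset.mem_Ico.mp hr
          have hrn : r < n := by
            have h2 : blowRow a (i+1) ≤ n := by
              rw [← hsum']; exact blowRow_mono a (by omega)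
            omega
          have : ((Finset.univ.filter fun c => g c ∈ Finset.Ico (blowRow a i)
              (blowRow a (i+1))).filter fun c => g c = r) =
              Finset.univ.filter fun c => g c = r := by
            ext c
            simp only [Finset.mem_filter, Finset.mem_univ, true_and, Finset.mem_Ico]
            constructor
            · rintro ⟨_, h⟩; exact h
            · rintro rfl; exact ⟨⟨hrmem.1, hrmem.2⟩, rfl⟩
          rw [this, hgfib r, if_pos hrn]
        rw [Finset.sum_congr rfl hterm, Finset.sum_const, Nat.card_Ico, smul_eq_mul, mul_one,
          blowRow_succ]
        omega
      · have hset : (Finset.univ.filter fun c => f c = i) = ∅ := by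
          ext c
          simp only [Finset.mem_filter, Finset.mem_univ, true_and, Finset.notMem_empty,
            iff_false]
          intro h
          have := hflt c; omega
        rw [hset, List.getD_eq_default _ _ hi]
        rfl
    refine ⟨f, ⟨?_, hfib, ?_⟩, ?_⟩
    · intro c
      rw [← shape_transfer hA hC c]
      exact hgshape c
    · intro x hx
      simp only [List.mem_cons, List.mem_singleton, List.not_mem_nil, or_false] at hx
      rcases hx with rfl | rfl
      · intro hcont
        exact hgavoid [2,3,1] (by simp) (trans_backward hA hB hC (Or.inl hcont))
      · intro hcont
        exact hgavoid [2,3,1] (by simp) (trans_backward hA hB hC (Or.inr hcont))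
      -- leftover membership absurdity handled above
    · -- blowup a f = g
      funext c
      show blowRow a (f c) + (Finset.univ.filter fun c' => f c' = f c ∧ c' < c).card = g c
      have hsetlt : (Finset.univ.filter fun c' => f c' = f c ∧ c' < c) =
          ((Finset.univ.filter fun c' => f c' = f c).filter fun c' => g c' < g c) := by
        ext c'
        simp only [Finset.mem_filter, Finset.mem_univ, true_and]
        constructor
        · rintro ⟨h1, h2⟩; exact ⟨h1, hB c' c h1 h2⟩
        · rintro ⟨h1, h2⟩
          refine ⟨h1, ?_⟩
          rcases lt_trichotomy c' c with h | h | h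
          · exact h
          · subst h; omega
          · exact absurd (hB c c' h1.symm h) (by omega)
      rw [hsetlt]
      have hcardimg : (((Finset.univ.filter fun c' => f c' = f c).filter
          fun c' => g c' < g c).image g).card =
          ((Finset.univ.filter fun c' => f c' = f c).filter fun c' => g c' < g c).card :=
        Finset.card_image_of_injective _ hginj
      have himg : (Finset.univ.filter fun c' => f c' = f c).image g =
          Finset.Ico (blowRow a (f c)) (blowRow a (f c + 1)) := by
        apply Finset.eq_of_subset_of_card_le
        · intro r hr
          obtain ⟨c', hc', rfl⟩ := Finset.mem_image.mp hr
          have h1 := (Finset.mem_filter.mp hc').2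
          rw [Finset.mem_Ico]
          exact ⟨h1 ▸ (hA c').1, h1 ▸ (hA c').2⟩
        · rw [Nat.card_Ico, Finset.card_image_of_injective _ hginj, hfib (f c), blowRow_succ]
          omega
      have himg2 : ((Finset.univ.filter fun c' => f c' = f c).filter
          fun c' => g c' < g c).image g =
          Finset.Ico (blowRow a (f c)) (g c) := by
        ext r
        simp only [Finset.mem_image, Finset.mem_filter, Finset.mem_univ, true_and,
          Finset.mem_Ico]
        constructor
        · rintro ⟨c', ⟨h1, h2⟩, rfl⟩
          exact ⟨h1 ▸ (hA c').1, h2⟩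
        · rintro ⟨u, w⟩
          have hrmem : r ∈ Finset.Ico (blowRow a (f c)) (blowRow a (f c + 1)) := by
            rw [Finset.mem_Ico]
            have := (hA c).2
            exact ⟨u, by omega⟩
          rw [← himg] at hrmem
          obtain ⟨c', hc', rfl⟩ := Finset.mem_image.mp hrmem
          exact ⟨c', ⟨(Finset.mem_filter.mp hc').2, w⟩, rfl⟩
      have := (hA c).1
      rw [← hcardimg, himg2, Nat.card_Ico]
      omega
end

section
/- If for every Ferrers shape λ the number of 0-1-fillings of λ with one 1 per column avoiding 231 is at most the number avoiding 312, then for every pattern β and every Ferrers shape λ, the number of 0-1-fillings of λ with one 1 per column avoiding 231 ⊕ β is at most the number avoiding 312 ⊕ β. -/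
/-- Direct sum of words: append `w` with all letters shifted up by `k`. -/
def oplus (k : ℕ) (x w : List ℕ) : List ℕ := x ++ w.map (· + k)

/-- `|W_λ(Ω)|`: the number of all fillings of `lam` with exactly one 1 per column (no row
constraint) avoiding all patterns in `Ω`. -/
noncomputable def TotalCount (lam : List ℕ) (Ω : List (List ℕ)) : ℕ :=
  Nat.card {f : Fin (lam.getD 0 0) → ℕ //
    (∀ c : Fin (lam.getD 0 0), (c : ℕ) < lam.getD (f c) 0) ∧ ∀ x ∈ Ω, ¬ FContains lam f x}

open scoped Classical

noncomputable section BWX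
namespace BWX

variable {lam β : List ℕ}

/-- One 1 per column, inside the shape. -/
def InShape (lam : List ℕ) {n : ℕ} (f : Fin n → ℕ) : Prop :=
  ∀ c : Fin n, (c : ℕ) < lam.getD (f c) 0

/-- An occurrence of `β` (rows compared in relative order) fully fitting in the shape. -/
def BOcc (lam β : List ℕ) {n : ℕ} (f : Fin n → ℕ) (d : Fin β.length → Fin n) : Prop :=
  StrictMono d ∧ (∀ j k, f (d j) < f (d k) ↔ β.get j < β.get k) ∧
    ∀ j k, ((d k : ℕ)) < lam.getD (f (d j)) 0

/-- Cell `(i,j)` is green: some fully-fitting occurrence of `β` lies strictly NE of it. -/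
def Green (lam β : List ℕ) {n : ℕ} (f : Fin n → ℕ) (i j : ℕ) : Prop :=
  ∃ d, BOcc lam β f d ∧ ∀ t, i < f (d t) ∧ j < (d t : ℕ)

lemma ferrers_getD_anti (hlam : IsFerrers lam) {i j : ℕ} (hij : i ≤ j) :
    lam.getD j 0 ≤ lam.getD i 0 := by
  rcases eq_or_lt_of_le hij with rfl | hij
  · exact le_refl _
  by_cases hj : j < lam.length
  · have hi : i < lam.length := lt_trans hij hj
    rw [List.getD_eq_getElem _ _ hj, List.getD_eq_getElem _ _ hi]
    exact hlam.1.rel_get_of_lt (a := ⟨i, hi⟩) (b := ⟨j, hj⟩) hij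
  · rw [List.getD_eq_default _ _ (not_lt.mp hj)]
    exact Nat.zero_le _

lemma green_anti {n : ℕ} {f : Fin n → ℕ} {i j i' j' : ℕ}
    (h : Green lam β f i j) (hi : i' ≤ i) (hj : j' ≤ j) : Green lam β f i' j' := by
  obtain ⟨d, hd, hne⟩ := h
  exact ⟨d, hd, fun t => ⟨lt_of_le_of_lt hi (hne t).1, lt_of_le_of_lt hj (hne t).2⟩⟩

lemma bocc_lt_length {n : ℕ} {f : Fin n → ℕ} {d : Fin β.length → Fin n}
    (hd : BOcc lam β f d) (t : Fin β.length) : f (d t) < lam.length := by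
  by_contra hcon
  have := hd.2.2 t t
  rw [List.getD_eq_default _ _ (not_lt.mp hcon)] at this
  omega

lemma green_row_lt (hβne : β ≠ []) {n : ℕ} {f : Fin n → ℕ} {i j : ℕ}
    (h : Green lam β f i j) : i < lam.length := by
  obtain ⟨d, hd, hne⟩ := h
  have t0 : Fin β.length := ⟨0, List.length_pos_iff.2 hβne⟩
  exact lt_trans (hne t0).1 (bocc_lt_length hd t0)

lemma green_cell (hlam : IsFerrers lam) (hβne : β ≠ []) {n : ℕ} {f : Fin n → ℕ} {i j : ℕ}
    (h : Green lam β f i j) : j < lam.getD i 0 := by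
  obtain ⟨d, hd, hne⟩ := h
  have t0 : Fin β.length := ⟨0, List.length_pos_iff.2 hβne⟩
  have h1 := (hne t0).2
  have h2 := hd.2.2 t0 t0
  have h3 := ferrers_getD_anti hlam (le_of_lt (hne t0).1)
  omega

lemma green_witness (hβne : β ≠ []) {n : ℕ} {f : Fin n → ℕ} {i j : ℕ}
    (hg : Green lam β f i j) :
    ∃ d, BOcc lam β f d ∧ (∀ t, i < f (d t) ∧ j < (d t : ℕ)) ∧
      ∀ t, ¬ Green lam β f (f (d t)) ((d t : ℕ)) := by
  have hβ0 : 0 < β.length := List.length_pos_iff.2 hβne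
  obtain ⟨d, hd, hne⟩ := hg
  have key : ∀ N (d : Fin β.length → Fin n),
      (BOcc lam β f d ∧ ∀ t, i < f (d t) ∧ j < (d t : ℕ)) → n - (d ⟨0, hβ0⟩ : ℕ) ≤ N →
      ∃ d', BOcc lam β f d' ∧ (∀ t, i < f (d' t) ∧ j < (d' t : ℕ)) ∧
        ∀ t, ¬ Green lam β f (f (d' t)) ((d' t : ℕ)) := by
    intro N
    induction N with
    | zero =>
      intro d _ hN
      have := (d ⟨0, hβ0⟩).isLt
      omega
    | succ N ih =>
      rintro d ⟨hd, hne⟩ hN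
      by_cases hgr : ∃ t, Green lam β f (f (d t)) ((d t : ℕ))
      · obtain ⟨t, d', hd', hne'⟩ := hgr
        refine ih d' ⟨hd', fun s => ⟨lt_trans (hne t).1 (hne' s).1,
          lt_trans (hne t).2 (hne' s).2⟩⟩ ?_
        have h1 : (d ⟨0, hβ0⟩ : ℕ) ≤ (d t : ℕ) :=
          hd.1.monotone (show (⟨0, hβ0⟩ : Fin β.length) ≤ t by simp [Fin.le_def])
        have h2 := (hne' ⟨0, hβ0⟩).2
        have := (d' ⟨0, hβ0⟩).isLt
        omega
      · exact ⟨d, hd, hne, fun t => (not_exists.mp hgr t)⟩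
  exact key n d ⟨hd, hne⟩ (Nat.sub_le _ _)

lemma green_mono (hβne : β ≠ []) {n : ℕ} {f g : Fin n → ℕ}
    (hfg : ∀ c, ¬ Green lam β f (f c) (c : ℕ) → f c = g c) {i j : ℕ}
    (h : Green lam β f i j) : Green lam β g i j := by
  obtain ⟨d, hd, hne, hng⟩ := green_witness hβne h
  have he : ∀ t, f (d t) = g (d t) := fun t => hfg _ (hng t)
  refine ⟨d, ⟨hd.1, fun j k => ?_, fun j k => ?_⟩, fun t => ?_⟩
  · rw [← he, ← he]; exact hd.2.1 j k
  · rw [← he]; exact hd.2.2 j k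
  · rw [← he]; exact hne t

end BWX

namespace BWX
variable {lam β : List ℕ}

lemma nat_downclosed (T : Finset ℕ) (hT : ∀ a b : ℕ, a ≤ b → b ∈ T → a ∈ T) (i : ℕ) :
    i ∈ T ↔ i < T.card := by
  constructor
  · intro hi
    have hsub : Finset.range (i + 1) ⊆ T := by
      intro j hj
      exact hT j i (by simpa using Nat.lt_succ_iff.mp (Finset.mem_range.mp hj)) hi
    have := Finset.card_le_card hsub
    simpa using this
  · intro hi
    by_contra hcon
    have hsub : T ⊆ Finset.range i := by
      intro j hj
      rcases lt_or_ge j i with h | h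
      · exact Finset.mem_range.mpr h
      · exact absurd (hT i j h hj) hcon
    have := Finset.card_le_card hsub
    simp at this
    omega

lemma mem_downclosed_iff {N : ℕ} (S : Finset (Fin N))
    (hS : ∀ a b : Fin N, a ≤ b → b ∈ S → a ∈ S) (k : Fin N) :
    k ∈ S ↔ (k : ℕ) < S.card := by
  have hcard : (S.image Fin.val).card = S.card :=
    Finset.card_image_of_injective _ Fin.val_injective
  have hdc : ∀ a b : ℕ, a ≤ b → b ∈ S.image Fin.val → a ∈ S.image Fin.val := by
    rintro a b hab hb
    simp only [Finset.mem_image] at hb ⊢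
    obtain ⟨b', hb', rfl⟩ := hb
    exact ⟨⟨a, lt_of_le_of_lt hab b'.isLt⟩, hS _ _ (by simpa [Fin.le_def] using hab) hb', rfl⟩
  rw [← hcard, ← nat_downclosed _ hdc]
  simp only [Finset.mem_image]
  constructor
  · intro hk; exact ⟨k, hk, rfl⟩
  · rintro ⟨k', hk', hv⟩; rwa [show k = k' from Fin.ext hv.symm]

lemma oplus_length (m : ℕ) (x : List ℕ) : (oplus m x β).length = x.length + β.length := by
  simp [oplus]

lemma lt_oplus_length {m : ℕ} {x : List ℕ} {v : ℕ} (h : v < x.length + β.length) :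
    v < (oplus m x β).length := lt_of_lt_of_eq h (oplus_length m x).symm

lemma oplus_val_lt {m : ℕ} {x : List ℕ} (j : Fin (oplus m x β).length) :
    (j : ℕ) < x.length + β.length := by
  exact lt_of_lt_of_eq j.isLt (oplus_length m x)

lemma oplus_get_left {m : ℕ} {x : List ℕ} (j : Fin (oplus m x β).length)
    (h : (j : ℕ) < x.length) : (oplus m x β).get j = x.get ⟨j, h⟩ := by
  simp only [oplus, List.get_eq_getElem]
  exact List.getElem_append_left h

lemma oplus_get_right {m : ℕ} {x : List ℕ} (j : Fin (oplus m x β).length)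
    (h : x.length ≤ (j : ℕ)) :
    (oplus m x β).get j = β.get ⟨(j : ℕ) - x.length, by
      have := oplus_val_lt j; omega⟩ + m := by
  rw [List.get_eq_getElem]
  simp only [oplus]
  rw [List.getElem_append_right h]
  simp

/-- The splitting lemma: a filling contains `x ⊕ β` iff it has an occurrence of `x`
all of whose cells are green. -/
lemma split (hlam : IsFerrers lam) (hβ : ∀ l ∈ β, 0 < l) (hβne : β ≠ [])
    {m : ℕ} {x : List ℕ} (hx : ∀ l ∈ x, l ≤ m) (hxne : x ≠ [])
    {n : ℕ} {f : Fin n → ℕ} :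
    FContains lam f (oplus m x β) ↔
      ∃ c : Fin x.length → Fin n, StrictMono c ∧
        (∀ j k, f (c j) < f (c k) ↔ x.get j < x.get k) ∧
        ∀ j k, Green lam β f (f (c j)) ((c k : ℕ)) := by
  have hβ0 : 0 < β.length := List.length_pos_iff.2 hβne
  have hx0 : 0 < x.length := List.length_pos_iff.2 hxne
  have hxmem : ∀ j : Fin x.length, x.get j ≤ m :=
    fun j => hx _ (List.mem_iff_get.2 ⟨j, rfl⟩)
  have hβmem : ∀ t : Fin β.length, 0 < β.get t :=
    fun t => hβ _ (List.mem_iff_get.2 ⟨t, rfl⟩)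
  constructor
  · rintro ⟨cc, hmono, hiso, hfit⟩
    have hgL : ∀ (j : Fin x.length) (hh : (j : ℕ) < (oplus m x β).length),
        (oplus m x β).get ⟨(j : ℕ), hh⟩ = x.get j := by
      intro j hh
      rw [oplus_get_left _ (show ((⟨(j : ℕ), hh⟩ : Fin (oplus m x β).length) : ℕ) < x.length
        from j.isLt)]
    have hgR : ∀ (t : Fin β.length) (hh : x.length + (t : ℕ) < (oplus m x β).length),
        (oplus m x β).get ⟨x.length + (t : ℕ), hh⟩ = β.get t + m := by
      intro t hh
      rw [oplus_get_right _ (show x.length ≤ ((⟨x.length + (t : ℕ), hh⟩ :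
        Fin (oplus m x β).length) : ℕ) from Nat.le_add_right _ _)]
      congr 2
      exact Fin.ext (by simp)
    refine ⟨fun j => cc ⟨(j : ℕ), lt_oplus_length (by omega)⟩, ?_, ?_, ?_⟩
    · intro j k hjk
      exact hmono (Fin.mk_lt_mk.2 (Fin.lt_def.1 hjk))
    · intro j k
      have := hiso ⟨(j : ℕ), lt_oplus_length (by omega)⟩ ⟨(k : ℕ), lt_oplus_length (by omega)⟩
      rwa [hgL, hgL] at this
    · intro j k
      refine ⟨fun t => cc ⟨x.length + (t : ℕ), lt_oplus_length (by omega)⟩, ⟨?_, ?_, ?_⟩, ?_⟩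
      · intro s t hst
        have hst' := Fin.lt_def.1 hst
        exact hmono (Fin.mk_lt_mk.2 (by omega))
      · intro s t
        have := hiso ⟨x.length + (s : ℕ), lt_oplus_length (by omega)⟩
          ⟨x.length + (t : ℕ), lt_oplus_length (by omega)⟩
        rwa [hgR, hgR, Nat.add_lt_add_iff_right] at this
      · intro s t
        exact hfit _ _
      · intro t
        constructor
        · have := hiso ⟨(j : ℕ), lt_oplus_length (by omega)⟩
            ⟨x.length + (t : ℕ), lt_oplus_length (by omega)⟩
          rw [hgL, hgR] at this
          refine this.mpr ?_
          have h1 := hxmem j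
          have h2 := hβmem t
          omega
        · exact hmono (Fin.mk_lt_mk.2 (by have := k.isLt; omega))
  · rintro ⟨c, hcmono, hciso, hg⟩
    obtain ⟨js, _, hjs⟩ := Finset.exists_max_image Finset.univ (fun j => f (c j))
      ⟨⟨0, hx0⟩, Finset.mem_univ _⟩
    have hjs' : ∀ a, f (c a) ≤ f (c js) := fun a => hjs a (Finset.mem_univ a)
    obtain ⟨kmax, hkmax⟩ : ∃ kmax : Fin x.length, (kmax : ℕ) = x.length - 1 :=
      ⟨⟨x.length - 1, by omega⟩, rfl⟩
    have hck : ∀ k : Fin x.length, (c k : ℕ) ≤ (c kmax : ℕ) := by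
      intro k
      exact Fin.le_def.mp (hcmono.monotone (show k ≤ kmax by
        rw [Fin.le_def, hkmax]; have := k.isLt; omega))
    obtain ⟨d, hd, hne⟩ := hg js kmax
    obtain ⟨t0⟩ : Nonempty (Fin β.length) := ⟨⟨0, hβ0⟩⟩
    refine ⟨fun i => if h : (i : ℕ) < x.length then c ⟨i, h⟩ else
      d ⟨(i : ℕ) - x.length, by have := oplus_val_lt i; omega⟩, ?_, ?_, ?_⟩
    · intro i j hij
      have hij' := Fin.lt_def.1 hij
      dsimp only
      by_cases hi : (i : ℕ) < x.length <;> by_cases hj : (j : ℕ) < x.length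
      · rw [dif_pos hi, dif_pos hj]
        exact hcmono (Fin.mk_lt_mk.2 hij')
      · rw [dif_pos hi, dif_neg hj, Fin.lt_def]
        exact lt_of_le_of_lt (hck _) ((hne _).2)
      · omega
      · rw [dif_neg hi, dif_neg hj]
        exact hd.1 (Fin.mk_lt_mk.2 (by omega))
    · intro i j
      dsimp only
      by_cases hi : (i : ℕ) < x.length <;> by_cases hj : (j : ℕ) < x.length
      · rw [dif_pos hi, dif_pos hj, oplus_get_left i hi, oplus_get_left j hj]
        exact hciso _ _
      · rw [dif_pos hi, dif_neg hj, oplus_get_left i hi, oplus_get_right j (by omega)]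
        exact iff_of_true (lt_of_le_of_lt (hjs' _) (hne _).1)
          (lt_of_le_of_lt (hxmem _) (Nat.lt_add_of_pos_left (hβmem _)))
      · rw [dif_neg hi, dif_pos hj, oplus_get_right i (by omega), oplus_get_left j hj]
        exact iff_of_false (not_lt.2 (le_of_lt (lt_of_le_of_lt (hjs' _) (hne _).1)))
          (not_lt.2 (le_trans (hxmem _) (Nat.le_add_left m _)))
      · rw [dif_neg hi, dif_neg hj, oplus_get_right i (by omega),
          oplus_get_right j (by omega), Nat.add_lt_add_iff_right]
        exact hd.2.1 _ _
    · intro i j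
      dsimp only
      by_cases hi : (i : ℕ) < x.length <;> by_cases hj : (j : ℕ) < x.length
      · rw [dif_pos hi, dif_pos hj]
        calc ((c ⟨(j : ℕ), hj⟩ : Fin n) : ℕ) ≤ (c kmax : ℕ) := hck _
          _ < ((d t0 : Fin n) : ℕ) := (hne t0).2
          _ < lam.getD (f (d t0)) 0 := hd.2.2 t0 t0
          _ ≤ lam.getD (f (c ⟨(i : ℕ), hi⟩)) 0 :=
            ferrers_getD_anti hlam (le_of_lt (lt_of_le_of_lt (hjs' _) (hne t0).1))
      · rw [dif_pos hi, dif_neg hj]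
        have hq : ∀ q : Fin β.length, ((d q : Fin n) : ℕ) <
            lam.getD (f (c ⟨(i : ℕ), hi⟩)) 0 := by
          intro q
          exact lt_of_lt_of_le (hd.2.2 q q)
            (ferrers_getD_anti hlam (le_of_lt (lt_of_le_of_lt (hjs' _) (hne q).1)))
        exact hq _
      · rw [dif_neg hi, dif_pos hj]
        calc ((c ⟨(j : ℕ), hj⟩ : Fin n) : ℕ) ≤ (c kmax : ℕ) := hck _
          _ < ((d t0 : Fin n) : ℕ) := (hne t0).2
          _ < _ := hd.2.2 _ t0
      · rw [dif_neg hi, dif_neg hj]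
        exact hd.2.2 _ _

end BWX

namespace BWX
variable (lam β : List ℕ) {n : ℕ}

/-- Height of the green column above position `c`. -/
def Ht (f₀ : Fin n → ℕ) (c : ℕ) : ℕ :=
  ((Finset.range lam.length).filter (fun i => Green lam β f₀ i c)).card

lemma ht_spec (hβne : β ≠ []) (f₀ : Fin n → ℕ) (i c : ℕ) :
    Green lam β f₀ i c ↔ i < Ht lam β f₀ c := by
  have hdc : ∀ a b : ℕ, a ≤ b →
      b ∈ (Finset.range lam.length).filter (fun i => Green lam β f₀ i c) →
      a ∈ (Finset.range lam.length).filter (fun i => Green lam β f₀ i c) := by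
    intro a b hab hb
    rw [Finset.mem_filter, Finset.mem_range] at hb ⊢
    exact ⟨by omega, green_anti hb.2 hab le_rfl⟩
  constructor
  · intro hg
    exact (nat_downclosed _ hdc i).1 (Finset.mem_filter.2
      ⟨Finset.mem_range.2 (green_row_lt hβne hg), hg⟩)
  · intro hi
    exact (Finset.mem_filter.1 ((nat_downclosed _ hdc i).2 hi)).2

lemma ht_anti (f₀ : Fin n → ℕ) {c c' : ℕ} (hcc : c ≤ c') :
    Ht lam β f₀ c' ≤ Ht lam β f₀ c := by
  apply Finset.card_le_card
  apply Finset.monotone_filter_right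
  intro i _ hg
  exact green_anti hg le_rfl hcc

/-- Columns whose 1 lies in a green cell. -/
def Dcols (f₀ : Fin n → ℕ) : Finset (Fin n) :=
  Finset.univ.filter (fun c => f₀ c < Ht lam β f₀ (c : ℕ))

/-- Row lengths of the derived shape. -/
def nuR (f₀ : Fin n → ℕ) (r : ℕ) : ℕ :=
  ((Dcols lam β f₀).filter (fun c : Fin n => r < Ht lam β f₀ (c : ℕ))).card

/-- The derived Ferrers shape. -/
def nu (f₀ : Fin n → ℕ) : List ℕ :=
  List.ofFn (fun r : Fin ((Dcols lam β f₀).sup (fun c : Fin n => Ht lam β f₀ (c : ℕ))) =>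
    nuR lam β f₀ (r : ℕ))

lemma nu_length (f₀ : Fin n → ℕ) :
    (nu lam β f₀).length = (Dcols lam β f₀).sup (fun c : Fin n => Ht lam β f₀ (c : ℕ)) := by
  simp [nu]

lemma nu_getD (f₀ : Fin n → ℕ) (r : ℕ) : (nu lam β f₀).getD r 0 = nuR lam β f₀ r := by
  by_cases hr : r < (nu lam β f₀).length
  · rw [List.getD_eq_getElem _ _ hr]
    simp only [nu, List.getElem_ofFn]
  · rw [List.getD_eq_default _ _ (by omega)]
    symm
    rw [nuR, Finset.card_eq_zero, Finset.filter_eq_empty_iff]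
    intro c hc
    have h1 : Ht lam β f₀ (c : ℕ) ≤ (nu lam β f₀).length := by
      rw [nu_length]
      exact Finset.le_sup (f := fun c : Fin n => Ht lam β f₀ (c : ℕ)) hc
    omega

lemma nu_ferrers (f₀ : Fin n → ℕ) : IsFerrers (nu lam β f₀) := by
  constructor
  · rw [List.pairwise_iff_getElem]
    intro i j hi hj hij
    simp only [nu, List.getElem_ofFn]
    apply Finset.card_le_card
    apply Finset.monotone_filter_right
    intro c _ hc
    omega
  · intro t ht
    obtain ⟨r, rfl⟩ := List.mem_ofFn.1 ht
    obtain ⟨c, hc, hr⟩ := Finset.lt_sup_iff.1 r.isLt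
    exact Finset.card_pos.2 ⟨c, Finset.mem_filter.2 ⟨hc, hr⟩⟩

lemma dcard (f₀ : Fin n → ℕ) : (Dcols lam β f₀).card = (nu lam β f₀).getD 0 0 := by
  rw [nu_getD, nuR, Finset.filter_true_of_mem]
  intro c hc
  rw [Dcols, Finset.mem_filter] at hc
  omega

/-- Enumeration of the inner columns in increasing order. -/
noncomputable def eIso (f₀ : Fin n → ℕ) :
    Fin ((nu lam β f₀).getD 0 0) ≃o {x // x ∈ Dcols lam β f₀} :=
  (Dcols lam β f₀).orderIsoOfFin (dcard lam β f₀)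

lemma mem_prefix (f₀ : Fin n → ℕ) (k : Fin ((nu lam β f₀).getD 0 0)) (r : ℕ) :
    r < Ht lam β f₀ (((eIso lam β f₀ k : Fin n)) : ℕ) ↔ (k : ℕ) < nuR lam β f₀ r := by
  classical
  set S := Finset.univ.filter
    (fun k' : Fin ((nu lam β f₀).getD 0 0) =>
      r < Ht lam β f₀ (((eIso lam β f₀ k' : Fin n)) : ℕ)) with hS
  have hdc : ∀ a b, a ≤ b → b ∈ S → a ∈ S := by
    intro a b hab hb
    simp only [hS, Finset.mem_filter, Finset.mem_univ, true_and] at hb ⊢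
    refine lt_of_lt_of_le hb (ht_anti lam β f₀ ?_)
    have h1 : eIso lam β f₀ a ≤ eIso lam β f₀ b := (eIso lam β f₀).monotone hab
    exact h1
  have hcard : S.card = nuR lam β f₀ r := by
    unfold nuR
    apply Finset.card_bij (fun k' _ => ((eIso lam β f₀ k' : Fin n)))
    · intro a ha
      simp only [hS, Finset.mem_filter, Finset.mem_univ, true_and] at ha
      exact Finset.mem_filter.2 ⟨(eIso lam β f₀ a).2, ha⟩
    · intro a _ b _ hab
      exact (eIso lam β f₀).injective (Subtype.coe_injective hab)
    · intro c hc
      have hc' := Finset.mem_filter.1 hc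
      refine ⟨(eIso lam β f₀).symm ⟨c, hc'.1⟩, ?_, ?_⟩
      · simp only [hS, Finset.mem_filter, Finset.mem_univ, true_and]
        rw [OrderIso.apply_symm_apply]
        exact hc'.2
      · rw [OrderIso.apply_symm_apply]
  rw [← hcard, ← mem_downclosed_iff S hdc k]
  simp [hS]

/-- Fiber invariant : the positions of the ones lying outside the green region. -/
def Phi (f : Fin n → ℕ) : Fin n → Option ℕ :=
  fun c => if Green lam β f (f c) (c : ℕ) then none else some (f c)

variable {lam β}

lemma phi_point {f g : Fin n → ℕ} (hph : Phi lam β f = Phi lam β g) (c : Fin n) :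
    (Green lam β f (f c) (c : ℕ) ↔ Green lam β g (g c) (c : ℕ)) ∧
      (¬ Green lam β f (f c) (c : ℕ) → f c = g c) := by
  have hc := congrFun hph c
  simp only [Phi] at hc
  by_cases h1 : Green lam β f (f c) (c : ℕ) <;> by_cases h2 : Green lam β g (g c) (c : ℕ)
  · exact ⟨iff_of_true h1 h2, fun hn => absurd h1 hn⟩
  · rw [if_pos h1, if_neg h2] at hc; simp at hc
  · rw [if_neg h1, if_pos h2] at hc; simp at hc
  · rw [if_neg h1, if_neg h2] at hc
    exact ⟨iff_of_false h1 h2, fun _ => Option.some.inj hc⟩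

lemma green_eq_of_phi (hβne : β ≠ []) {f f₀ : Fin n → ℕ}
    (hph : Phi lam β f = Phi lam β f₀) (i j : ℕ) :
    Green lam β f i j ↔ Green lam β f₀ i j := by
  constructor
  · exact green_mono hβne (fun c hc => (phi_point hph c).2 hc)
  · refine green_mono hβne (fun c hc => ?_)
    exact ((phi_point hph c).2 (fun hg => hc ((phi_point hph c).1.1 hg))).symm

lemma inner_iff (hβne : β ≠ []) {f f₀ : Fin n → ℕ}
    (hph : Phi lam β f = Phi lam β f₀) (c : Fin n) :
    Green lam β f (f c) (c : ℕ) ↔ c ∈ Dcols lam β f₀ := by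
  rw [Dcols, Finset.mem_filter]
  rw [(phi_point hph c).1, ht_spec lam β hβne f₀]
  simp

lemma outer_eq (hβne : β ≠ []) {f f₀ : Fin n → ℕ}
    (hph : Phi lam β f = Phi lam β f₀) (c : Fin n) (hc : c ∉ Dcols lam β f₀) :
    f c = f₀ c :=
  (phi_point hph c).2 (fun hg => hc ((inner_iff hβne hph c).1 hg))

lemma contains_nu (hlam : IsFerrers lam) (hβ : ∀ l ∈ β, 0 < l) (hβne : β ≠ [])
    (f₀ : Fin n → ℕ) {m : ℕ} {x : List ℕ} (hx : ∀ l ∈ x, l ≤ m) (hxne : x ≠ [])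
    {f : Fin n → ℕ}
    (hgf : ∀ i j, Green lam β f i j ↔ Green lam β f₀ i j)
    (hDf : ∀ c, Green lam β f (f c) (c : ℕ) ↔ c ∈ Dcols lam β f₀) :
    FContains lam f (oplus m x β) ↔
      FContains (nu lam β f₀) (fun k => f ((eIso lam β f₀ k : Fin n))) x := by
  rw [split hlam hβ hβne hx hxne]
  constructor
  · rintro ⟨c, hmono, hiso, hg⟩
    have hmem : ∀ j, c j ∈ Dcols lam β f₀ := fun j => (hDf (c j)).1 (hg j j)
    have hv : ∀ j, f ((eIso lam β f₀ ((eIso lam β f₀).symm ⟨c j, hmem j⟩) : Fin n)) = f (c j) :=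
      fun j => by rw [OrderIso.apply_symm_apply]
    refine ⟨fun j => (eIso lam β f₀).symm ⟨c j, hmem j⟩, ?_, ?_, ?_⟩
    · intro j k hjk
      exact (eIso lam β f₀).symm.strictMono (Subtype.mk_lt_mk.2 (hmono hjk))
    · intro j k
      simp only
      rw [hv, hv]
      exact hiso j k
    · intro j k
      have h1 : f (c j) < Ht lam β f₀ ((c k : ℕ)) :=
        (ht_spec lam β hβne f₀ _ _).1 ((hgf _ _).1 (hg j k))
      have h2 : ((eIso lam β f₀ ((eIso lam β f₀).symm ⟨c k, hmem k⟩) : Fin n) : ℕ)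
          = (c k : ℕ) := by rw [OrderIso.apply_symm_apply]
      have h3 := (mem_prefix lam β f₀ ((eIso lam β f₀).symm ⟨c k, hmem k⟩) (f (c j))).1
        (by rw [h2]; exact h1)
      simp only
      rw [hv]
      exact lt_of_lt_of_eq h3 (nu_getD lam β f₀ (f (c j))).symm
  · rintro ⟨c', hmono, hiso, hfit⟩
    refine ⟨fun j => (eIso lam β f₀ (c' j) : Fin n), ?_, ?_, ?_⟩
    · intro j k hjk
      exact Subtype.coe_lt_coe.2 ((eIso lam β f₀).strictMono (hmono hjk))
    · exact hiso
    · intro j k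
      refine (hgf _ _).2 ((ht_spec lam β hβne f₀ _ _).2 ?_)
      refine (mem_prefix lam β f₀ (c' k) _).2 ?_
      exact lt_of_lt_of_eq (hfit j k) (nu_getD lam β f₀ _)

end BWX

namespace BWX
variable (lam β : List ℕ) {n : ℕ}

noncomputable def fwd (f₀ f : Fin n → ℕ) : Fin ((nu lam β f₀).getD 0 0) → ℕ :=
  fun k => f ((eIso lam β f₀ k : Fin n))

noncomputable def bwd (f₀ : Fin n → ℕ) (g : Fin ((nu lam β f₀).getD 0 0) → ℕ) :
    Fin n → ℕ :=
  fun c => if h : c ∈ Dcols lam β f₀ then g ((eIso lam β f₀).symm ⟨c, h⟩) else f₀ c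

lemma fwd_bwd (f₀ : Fin n → ℕ) (g : Fin ((nu lam β f₀).getD 0 0) → ℕ) :
    fwd lam β f₀ (bwd lam β f₀ g) = g := by
  funext k
  simp only [fwd, bwd]
  rw [dif_pos (eIso lam β f₀ k).2]
  have h1 : (⟨((eIso lam β f₀ k : Fin n)), (eIso lam β f₀ k).2⟩ :
      {c // c ∈ Dcols lam β f₀}) = eIso lam β f₀ k := Subtype.ext rfl
  rw [h1, OrderIso.symm_apply_apply]

variable {lam β}

lemma fiber_equiv (hlam : IsFerrers lam) (hβ : ∀ l ∈ β, 0 < l) (hβne : β ≠ [])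
    (f₀ : Fin n → ℕ) (hf₀ : InShape lam f₀)
    {m : ℕ} {x : List ℕ} (hx : ∀ l ∈ x, l ≤ m) (hxne : x ≠ []) :
    Nonempty
      ({f : Fin n → ℕ // (InShape lam f ∧ Phi lam β f = Phi lam β f₀) ∧
          ¬ FContains lam f (oplus m x β)} ≃
       {g : Fin ((nu lam β f₀).getD 0 0) → ℕ //
          InShape (nu lam β f₀) g ∧ ¬ FContains (nu lam β f₀) g x}) := by
  classical
  -- forward membership
  have hfwd : ∀ f : Fin n → ℕ, (InShape lam f ∧ Phi lam β f = Phi lam β f₀) →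
      ¬ FContains lam f (oplus m x β) →
      InShape (nu lam β f₀) (fwd lam β f₀ f) ∧
        ¬ FContains (nu lam β f₀) (fwd lam β f₀ f) x := by
    rintro f ⟨hfs, hph⟩ hav
    have hgr := green_eq_of_phi hβne hph
    have hin := inner_iff hβne hph
    constructor
    · intro k
      have hk1 : Green lam β f (f ((eIso lam β f₀ k : Fin n)))
          (((eIso lam β f₀ k : Fin n)) : ℕ) := (hin _).2 (eIso lam β f₀ k).2
      have hk2 : f ((eIso lam β f₀ k : Fin n)) <
          Ht lam β f₀ (((eIso lam β f₀ k : Fin n)) : ℕ) :=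
        (ht_spec lam β hβne f₀ _ _).1 ((hgr _ _).1 hk1)
      exact lt_of_lt_of_eq ((mem_prefix lam β f₀ k _).1 hk2)
        (nu_getD lam β f₀ _).symm
    · intro hcon
      exact hav ((contains_nu hlam hβ hβne f₀ hx hxne hgr hin).2 hcon)
  -- backward membership
  have hbwd : ∀ g : Fin ((nu lam β f₀).getD 0 0) → ℕ,
      InShape (nu lam β f₀) g → ¬ FContains (nu lam β f₀) g x →
      (InShape lam (bwd lam β f₀ g) ∧
        Phi lam β (bwd lam β f₀ g) = Phi lam β f₀) ∧
      ¬ FContains lam (bwd lam β f₀ g) (oplus m x β) := by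
    intro g hgs hgav
    have hgD : ∀ (c : Fin n) (h : c ∈ Dcols lam β f₀),
        Green lam β f₀ (g ((eIso lam β f₀).symm ⟨c, h⟩)) (c : ℕ) := by
      intro c h
      have h1 := lt_of_lt_of_eq (hgs ((eIso lam β f₀).symm ⟨c, h⟩)) (nu_getD lam β f₀ _)
      have h2 := (mem_prefix lam β f₀ ((eIso lam β f₀).symm ⟨c, h⟩) _).2 h1
      rw [OrderIso.apply_symm_apply] at h2
      exact (ht_spec lam β hβne f₀ _ _).2 h2
    have hfD : ∀ (c : Fin n), c ∈ Dcols lam β f₀ →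
        Green lam β f₀ (bwd lam β f₀ g c) (c : ℕ) := by
      intro c h
      simp only [bwd]
      rw [dif_pos h]
      exact hgD c h
    have hmono1 : ∀ i j, Green lam β f₀ i j → Green lam β (bwd lam β f₀ g) i j := by
      intro i j
      apply green_mono hβne
      intro c hc
      simp only [bwd]
      rw [dif_neg (fun hD => hc ((inner_iff hβne rfl c).2 hD))]
    have hmono2 : ∀ i j, Green lam β (bwd lam β f₀ g) i j → Green lam β f₀ i j := by
      intro i j
      apply green_mono hβne
      intro c hc
      by_cases hD : c ∈ Dcols lam β f₀
      · exact absurd (hmono1 _ _ (hfD c hD)) hc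
      · simp only [bwd]
        rw [dif_neg hD]
    have hgr' : ∀ i j, Green lam β (bwd lam β f₀ g) i j ↔ Green lam β f₀ i j :=
      fun i j => ⟨hmono2 i j, hmono1 i j⟩
    have hin' : ∀ c : Fin n, Green lam β (bwd lam β f₀ g) (bwd lam β f₀ g c) (c : ℕ) ↔
        c ∈ Dcols lam β f₀ := by
      intro c
      constructor
      · intro hgreen
        by_contra hD
        have h1 := hmono2 _ _ hgreen
        simp only [bwd] at h1
        rw [dif_neg hD] at h1
        exact hD ((inner_iff hβne rfl c).1 h1)
      · exact fun hD => hmono1 _ _ (hfD c hD)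
    have hshape : InShape lam (bwd lam β f₀ g) := by
      intro c
      by_cases hD : c ∈ Dcols lam β f₀
      · exact green_cell hlam hβne (hfD c hD)
      · simp only [bwd]
        rw [dif_neg hD]
        exact hf₀ c
    have hre : (fun k => bwd lam β f₀ g ((eIso lam β f₀ k : Fin n))) = g :=
      fwd_bwd lam β f₀ g
    refine ⟨⟨hshape, ?_⟩, ?_⟩
    · funext c
      simp only [Phi]
      by_cases hD : c ∈ Dcols lam β f₀
      · rw [if_pos ((hin' c).2 hD), if_pos ((inner_iff hβne rfl c).2 hD)]
      · rw [if_neg (fun hgreen => hD ((hin' c).1 hgreen)),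
          if_neg (fun hgreen => hD ((inner_iff hβne rfl c).1 hgreen))]
        have : bwd lam β f₀ g c = f₀ c := by
          simp only [bwd]; rw [dif_neg hD]
        rw [this]
    · intro hcon
      have := (contains_nu hlam hβ hβne f₀ hx hxne hgr' hin').1 hcon
      rw [hre] at this
      exact hgav this
  -- the equivalence
  refine ⟨⟨fun a => ⟨fwd lam β f₀ a.1, hfwd a.1 a.2.1 a.2.2⟩,
    fun b => ⟨bwd lam β f₀ b.1, hbwd b.1 b.2.1 b.2.2⟩, ?_, ?_⟩⟩
  · intro a
    apply Subtype.ext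
    funext c
    simp only [bwd, fwd]
    by_cases hD : c ∈ Dcols lam β f₀
    · rw [dif_pos hD, OrderIso.apply_symm_apply]
    · rw [dif_neg hD]
      exact (outer_eq hβne a.2.1.2 c hD).symm
  · intro b
    exact Subtype.ext (fwd_bwd lam β f₀ b.1)

lemma finite_fillings (lam : List ℕ) {n : ℕ} (P : (Fin n → ℕ) → Prop) :
    Finite {f : Fin n → ℕ // InShape lam f ∧ P f} := by
  have hmap : ∀ (a : {f : Fin n → ℕ // InShape lam f ∧ P f}) (c : Fin n),
      a.1 c < lam.length + 1 := by
    intro a c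
    by_contra hcon
    have := a.2.1 c
    rw [List.getD_eq_default _ _ (by omega)] at this
    omega
  apply Finite.of_injective
    (fun a => (fun c => (⟨a.1 c, hmap a c⟩ : Fin (lam.length + 1))))
  intro a b hab
  apply Subtype.ext
  funext c
  exact congrArg Fin.val (congrFun hab c)

lemma key {n : ℕ}
    (h : ∀ lam' : List ℕ, IsFerrers lam' →
      TotalCount lam' [[2, 3, 1]] ≤ TotalCount lam' [[3, 1, 2]])
    (hlam : IsFerrers lam) (hβ : ∀ l ∈ β, 0 < l) (hβne : β ≠ [])
    (y : Fin n → Option ℕ) :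
    ∃ F : {f : Fin n → ℕ // (InShape lam f ∧ Phi lam β f = y) ∧
            ¬ FContains lam f (oplus 3 [2, 3, 1] β)} →
          {f : Fin n → ℕ // (InShape lam f ∧ Phi lam β f = y) ∧
            ¬ FContains lam f (oplus 3 [3, 1, 2] β)},
      Function.Injective F := by
  classical
  by_cases hy : ∃ f₀ : Fin n → ℕ, InShape lam f₀ ∧ Phi lam β f₀ = y
  · obtain ⟨f₀, hf₀, rfl⟩ := hy
    obtain ⟨E1⟩ := fiber_equiv hlam hβ hβne f₀ hf₀ (m := 3) (x := [2, 3, 1])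
      (by intro l hl; fin_cases hl <;> norm_num) (by simp)
    obtain ⟨E2⟩ := fiber_equiv hlam hβ hβne f₀ hf₀ (m := 3) (x := [3, 1, 2])
      (by intro l hl; fin_cases hl <;> norm_num) (by simp)
    have hν := nu_ferrers lam β f₀
    have hcard := h (nu lam β f₀) hν
    rw [TotalCount, TotalCount] at hcard
    have e1 : {f : Fin ((nu lam β f₀).getD 0 0) → ℕ //
        (∀ c : Fin ((nu lam β f₀).getD 0 0), (c : ℕ) < (nu lam β f₀).getD (f c) 0) ∧
          ∀ x ∈ [[2, 3, 1]], ¬ FContains (nu lam β f₀) f x} ≃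
        {g : Fin ((nu lam β f₀).getD 0 0) → ℕ //
          InShape (nu lam β f₀) g ∧ ¬ FContains (nu lam β f₀) g [2, 3, 1]} :=
      Equiv.subtypeEquivRight (by intro g; simp [InShape])
    have e2 : {f : Fin ((nu lam β f₀).getD 0 0) → ℕ //
        (∀ c : Fin ((nu lam β f₀).getD 0 0), (c : ℕ) < (nu lam β f₀).getD (f c) 0) ∧
          ∀ x ∈ [[3, 1, 2]], ¬ FContains (nu lam β f₀) f x} ≃
        {g : Fin ((nu lam β f₀).getD 0 0) → ℕ //
          InShape (nu lam β f₀) g ∧ ¬ FContains (nu lam β f₀) g [3, 1, 2]} :=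
      Equiv.subtypeEquivRight (by intro g; simp [InShape])
    rw [Nat.card_congr e1, Nat.card_congr e2] at hcard
    haveI h1fin : Finite {g : Fin ((nu lam β f₀).getD 0 0) → ℕ //
        InShape (nu lam β f₀) g ∧ ¬ FContains (nu lam β f₀) g [2, 3, 1]} :=
      finite_fillings _ _
    haveI h2fin : Finite {g : Fin ((nu lam β f₀).getD 0 0) → ℕ //
        InShape (nu lam β f₀) g ∧ ¬ FContains (nu lam β f₀) g [3, 1, 2]} :=
      finite_fillings _ _
    haveI := Fintype.ofFinite {g : Fin ((nu lam β f₀).getD 0 0) → ℕ //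
        InShape (nu lam β f₀) g ∧ ¬ FContains (nu lam β f₀) g [2, 3, 1]}
    haveI := Fintype.ofFinite {g : Fin ((nu lam β f₀).getD 0 0) → ℕ //
        InShape (nu lam β f₀) g ∧ ¬ FContains (nu lam β f₀) g [3, 1, 2]}
    rw [Nat.card_eq_fintype_card, Nat.card_eq_fintype_card] at hcard
    obtain ⟨emb⟩ := Function.Embedding.nonempty_of_card_le hcard
    exact ⟨fun a => E2.symm (emb (E1 a)),
      fun a b hab => E1.injective (emb.injective (E2.symm.injective hab))⟩
  · refine ⟨fun a => absurd ⟨a.1, a.2.1.1, a.2.1.2⟩ hy, ?_⟩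
    intro a
    exact absurd ⟨a.1, a.2.1.1, a.2.1.2⟩ hy

end BWX


open BWX

/-- If `|W_λ(231)| ≤ |W_λ(312)|` for every Ferrers shape λ, then
`|W_λ(231 ⊕ β)| ≤ |W_λ(312 ⊕ β)|` for every pattern β and every Ferrers shape λ. -/
theorem stmt_16
    (h : ∀ lam : List ℕ, IsFerrers lam →
      TotalCount lam [[2, 3, 1]] ≤ TotalCount lam [[3, 1, 2]]) :
    ∀ β : List ℕ, (∀ l ∈ β, 0 < l) → ∀ lam : List ℕ, IsFerrers lam →
      TotalCount lam [oplus 3 [2, 3, 1] β] ≤ TotalCount lam [oplus 3 [3, 1, 2] β] := by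
  intro β hβ lam hlam
  rcases eq_or_ne β [] with rfl | hβne
  · simpa [oplus] using h lam hlam
  classical
  rw [TotalCount, TotalCount]
  have e1 : {f : Fin (lam.getD 0 0) → ℕ //
      (∀ c : Fin (lam.getD 0 0), (c : ℕ) < lam.getD (f c) 0) ∧
        ∀ x ∈ [oplus 3 [2, 3, 1] β], ¬ FContains lam f x} ≃
      {f : Fin (lam.getD 0 0) → ℕ // InShape lam f ∧
        ¬ FContains lam f (oplus 3 [2, 3, 1] β)} :=
    Equiv.subtypeEquivRight (by intro f; simp [InShape])
  have e2 : {f : Fin (lam.getD 0 0) → ℕ //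
      (∀ c : Fin (lam.getD 0 0), (c : ℕ) < lam.getD (f c) 0) ∧
        ∀ x ∈ [oplus 3 [3, 1, 2] β], ¬ FContains lam f x} ≃
      {f : Fin (lam.getD 0 0) → ℕ // InShape lam f ∧
        ¬ FContains lam f (oplus 3 [3, 1, 2] β)} :=
    Equiv.subtypeEquivRight (by intro f; simp [InShape])
  rw [Nat.card_congr e1, Nat.card_congr e2]
  haveI : Finite {f : Fin (lam.getD 0 0) → ℕ // InShape lam f ∧
      ¬ FContains lam f (oplus 3 [3, 1, 2] β)} := finite_fillings lam _
  obtain ⟨F, hF⟩ := Classical.axiomOfChoice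
    (fun y : Fin (lam.getD 0 0) → Option ℕ => key h hlam hβ hβne y)
  let A := {f : Fin (lam.getD 0 0) → ℕ // InShape lam f ∧
    ¬ FContains lam f (oplus 3 [2, 3, 1] β)}
  let Bt := {f : Fin (lam.getD 0 0) → ℕ // InShape lam f ∧
    ¬ FContains lam f (oplus 3 [3, 1, 2] β)}
  let G : A → Bt := fun a =>
    ⟨(F (Phi lam β a.1) ⟨a.1, ⟨a.2.1, rfl⟩, a.2.2⟩).1,
      (F (Phi lam β a.1) ⟨a.1, ⟨a.2.1, rfl⟩, a.2.2⟩).2.1.1,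
      (F (Phi lam β a.1) ⟨a.1, ⟨a.2.1, rfl⟩, a.2.2⟩).2.2⟩
  have hG1 : ∀ a : A, (G a).1 = (F (Phi lam β a.1) ⟨a.1, ⟨a.2.1, rfl⟩, a.2.2⟩).1 :=
    fun a => rfl
  apply Nat.card_le_card_of_injective G
  intro a b hab
  have hval : (F (Phi lam β a.1) ⟨a.1, ⟨a.2.1, rfl⟩, a.2.2⟩).1 =
      (F (Phi lam β b.1) ⟨b.1, ⟨b.2.1, rfl⟩, b.2.2⟩).1 := by
    rw [← hG1 a, ← hG1 b, hab]
  have hph : Phi lam β a.1 = Phi lam β b.1 := by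
    have h1 := (F (Phi lam β a.1) ⟨a.1, ⟨a.2.1, rfl⟩, a.2.2⟩).2.1.2
    have h2 := (F (Phi lam β b.1) ⟨b.1, ⟨b.2.1, rfl⟩, b.2.2⟩).2.1.2
    rw [← h1, ← h2, hval]
  have hcast : ∀ (y y' : Fin (lam.getD 0 0) → Option ℕ) (hyy : y = y')
      (f : Fin (lam.getD 0 0) → ℕ)
      (hf : (InShape lam f ∧ Phi lam β f = y) ∧
        ¬ FContains lam f (oplus 3 [2, 3, 1] β)),
      (F y ⟨f, hf⟩).1 = (F y' ⟨f, by rw [← hyy]; exact hf⟩).1 := by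
    rintro y y' rfl f hf
    rfl
  rw [hcast (Phi lam β b.1) (Phi lam β a.1) hph.symm b.1 ⟨⟨b.2.1, rfl⟩, b.2.2⟩] at hval
  have hsub := hF (Phi lam β a.1) (Subtype.ext hval)
  have hvv := congrArg Subtype.val hsub
  exact Subtype.ext hvv
end BWX
end
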